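/- arXiv:1304.0094 — 3 statements merged into one kernel-verified Lean document; each statement's English description precedes it below -/
import Mathlib

section
/- Let χ: ℙ₁ × ℙ₂ → ℙ' be a linear map satisfying conditions (i) and (ii), γ a regular embedding, and let φ, α', α be as described below. Then every line of ℙ₂ containing two points of the basis 𝓑 is a special line. -/
open Set

namespace Segre

variable {P Q : Type*}

/-- Two points are collinear w.r.t. a line set `L` if some line contains both. -/
def Collin (L : Set (Set P)) (x y : P) : Prop := ∃ g ∈ L, x ∈ g ∧ y ∈ g

/-- The union of all lines of `L` through both `x` and `y`; for distinct collinear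
points of a semilinear space this is the unique line `xy`. -/
def lineThru (L : Set (Set P)) (x y : P) : Set P := ⋃ g ∈ {g ∈ L | x ∈ g ∧ y ∈ g}, g

/-- The join `M₁ ∨ M₂` of two point sets in a (semi)linear space with line set `L`. -/
def sJoin (L : Set (Set P)) (M₁ M₂ : Set P) : Set P :=
  M₁ ∪ M₂ ∪
    ⋃ (x ∈ M₁) (y ∈ M₂) (_ : x ≠ y ∧ Collin L x y), lineThru L x y

/-- The (possibly empty) image point set `Xχ` of a single point under a partial map. -/
def ptImg (χ : P → Option Q) (X : P) : Set Q := {y | χ X = some y}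

/-- The image `Mχ` of a point set under a partial map. -/
def mapSet (χ : P → Option Q) (M : Set P) : Set Q := ⋃ X ∈ M, ptImg χ X

/-- Axioms (L1) and (L2) for a linear map from the semilinear space with point set `P`
and line set `L` into the projective space with point set `Q` and line set `L'`.
Points in the exceptional set are modelled by the value `none`. -/
def IsLinMap (L : Set (Set P)) (L' : Set (Set Q)) (χ : P → Option Q) : Prop :=
  (∀ X Y : P, Collin L X Y →
      mapSet χ (sJoin L {X} {Y}) = sJoin L' (ptImg χ X) (ptImg χ Y)) ∧
  (∀ X Y : P, Collin L X Y → X ≠ Y → ptImg χ X = ptImg χ Y →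
      ∃ Z ∈ lineThru L X Y, χ Z = none)

/-- A linear map is global if its domain is everything. -/
def IsGlobal (χ : P → Option Q) : Prop := ∀ X, χ X ≠ none

/-- The lines of the product of two semilinear spaces with line sets `L₁`, `L₂`. -/
def prodLines (L₁ : Set (Set P)) (L₂ : Set (Set Q)) : Set (Set (P × Q)) :=
  {s | (∃ X₁ : P, ∃ g₂ ∈ L₂, s = {X₁} ×ˢ g₂) ∨ ∃ g₁ ∈ L₁, ∃ X₂ : Q, s = g₁ ×ˢ {X₂}}

/-- The lines of the product of two lines `ℓ₁`, `ℓ₂` (viewed as semilinear spaces). -/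
def lineProdLines (ℓ₁ : Set P) (ℓ₂ : Set Q) : Set (Set (P × Q)) :=
  {s | (∃ X ∈ ℓ₁, s = {X} ×ˢ ℓ₂) ∨ ∃ Y ∈ ℓ₂, s = ℓ₁ ×ˢ {Y}}

/-- A collineation of a projective (or semilinear) space with line set `L`:
a bijection such that it and its inverse map lines onto lines. -/
def IsCollineation (L : Set (Set P)) (α : P → P) : Prop :=
  Function.Bijective α ∧ ∀ g : Set P, g ∈ L ↔ α '' g ∈ L

section Projective

variable {K V : Type*} [Field K] [AddCommGroup V] [Module K V]

/-- The point set of the projective line through two (distinct) points of a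
projective space `ℙ K V`. -/
def projLineThrough (x y : Projectivization K V) : Set (Projectivization K V) :=
  {z | z.submodule ≤ x.submodule ⊔ y.submodule}

/-- The lines of the projective space `ℙ K V`. -/
def projLines (K V : Type*) [Field K] [AddCommGroup V] [Module K V] :
    Set (Set (Projectivization K V)) :=
  {g | ∃ x y : Projectivization K V, x ≠ y ∧ g = projLineThrough x y}

/-- The linear span of (representatives of) a set of projective points; its projective
space is the projective closure of the set, whose projective dimension is the vector
rank of this span minus one. -/
def spanOf (M : Set (Projectivization K V)) : Submodule K V := ⨆ x ∈ M, x.submodule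

/-- `E` is the point set of a plane (projective dimension 2). -/
def IsPlane (E : Set (Projectivization K V)) : Prop :=
  ∃ W : Submodule K V, Module.finrank K ↥W = 3 ∧ E = {x | x.submodule ≤ W}

/-- The family of points `A` is a projective basis of the subspace of `ℙ K V`
corresponding to the submodule `W`: the representatives are linearly independent and
span `W`. -/
def IsProjBasisOf {ι : Type*} (A : ι → Projectivization K V) (W : Submodule K V) : Prop :=
  iSupIndep (fun i => (A i).submodule) ∧ (⨆ i, (A i).submodule) = W

end Projective

section PG

variable (F : Type*) [Field F]

/-- The point set of `PG(k, F)`. -/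
abbrev PGPt (k : ℕ) := Projectivization F (Fin (k + 1) → F)

/-- The line set of `PG(k, F)`. -/
abbrev PGLines (k : ℕ) := projLines F (Fin (k + 1) → F)

variable (n m : ℕ)

/-- A regular embedding `γ : ℙ₁ × ℙ₂ → ℙ̄`, where `ℙ₁ = PG(n,F)`, `ℙ₂ = PG(m,F)` and
`ℙ̄ = PG(nm+n+m, F)`: a global injective linear map of the product such that the
projective closure of the image has (projective) dimension `nm+n+m`. -/
def IsRegularEmbedding (γ : PGPt F n × PGPt F m → PGPt F (n * m + n + m)) : Prop :=
  IsLinMap (prodLines (PGLines F n) (PGLines F m)) (PGLines F (n * m + n + m))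
      (fun p => some (γ p)) ∧
  Function.Injective γ ∧
  Module.finrank F ↥(spanOf (Set.range γ)) = n * m + n + m + 1

variable {K W : Type*} [Field K] [AddCommGroup W] [Module K W]

/-- Condition (i) on `χ`, w.r.t. the basis `B` of `ℙ₂` and the plane `E ⊆ 𝒫₁`:
for every `i = 1, …, m` the restriction of `χ` to `E × {B 0, B i}` is global and
of rank greater than `2` (i.e. the vector rank of the span of its image exceeds `3`). -/
def CondI (χ : PGPt F n × PGPt F m → Option (Projectivization K W))
    (B : Fin (m + 1) → PGPt F m) (E : Set (PGPt F n)) : Prop :=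
  IsProjBasisOf B (⊤ : Submodule F (Fin (m + 1) → F)) ∧ IsPlane E ∧
  ∀ i : Fin (m + 1), i ≠ 0 →
    (∀ p ∈ E ×ˢ ({B 0, B i} : Set (PGPt F m)), χ p ≠ none) ∧
    3 < Module.rank K ↥(spanOf (mapSet χ (E ×ˢ ({B 0, B i} : Set (PGPt F m)))))

/-- Condition (ii) on `χ`, w.r.t. the point `A ∈ 𝒫₁`: the image `({A} × 𝒫₂)χ` has
projective dimension `m` (i.e. the vector rank of the span of the image is `m + 1`). -/
def CondII (χ : PGPt F n × PGPt F m → Option (Projectivization K W))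
    (A : PGPt F n) : Prop :=
  Module.rank K ↥(spanOf (mapSet χ (({A} : Set (PGPt F n)) ×ˢ (univ : Set (PGPt F m)))))
    = (m : Cardinal) + 1

/-- `ℓ₂` is a special line for the data `χ, γ, φ, α'`: it is a line of `ℙ₂` such that
(a) `({X} × ℓ₂)γφ = ({X} × ℓ₂)αχ` for every `X ∈ 𝒫₁`, and (b) the rank of `αχ`
restricted to `𝒫₁ × ℓ₂` is greater than `1` (vector rank of the span `> 2`). -/
def SpecialLine (χ : PGPt F n × PGPt F m → Option (Projectivization K W))
    (γ : PGPt F n × PGPt F m → PGPt F (n * m + n + m))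
    (φ : PGPt F (n * m + n + m) → Option (Projectivization K W))
    (α' : PGPt F m → PGPt F m) (ℓ₂ : Set (PGPt F m)) : Prop :=
  ℓ₂ ∈ PGLines F m ∧
  (∀ X : PGPt F n,
    mapSet (fun p => φ (γ p)) (({X} : Set (PGPt F n)) ×ˢ ℓ₂) =
      mapSet (fun p : PGPt F n × PGPt F m => χ (p.1, α' p.2))
        (({X} : Set (PGPt F n)) ×ˢ ℓ₂)) ∧
  2 < Module.rank K ↥(spanOf (mapSet (fun p : PGPt F n × PGPt F m => χ (p.1, α' p.2))
        ((univ : Set (PGPt F n)) ×ˢ ℓ₂)))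

end PG

end Segre

/-!
The map `Y ↦ (A, Y)χ` is a linear map of `ℙ₂` whose image spans a space of vector dimension
`m + 1`, so it has no exceptional point. Indeed, the image of the join of a point `x` and a
subspace `S` lies in the join of the images, so by induction the image of a subspace of vector
dimension `d` spans vector dimension at most `d`; and if `x` were exceptional, the image of
`ℙ₂ = x ∨ U`, with `U` a hyperplane not through `x`, would span no more than that of `U`.
Being global, `Y ↦ (A, Y)χ` is injective, so `α'` fixes every point of `𝓑` and maps the line
`ℓ₂ = B_i B_j` onto itself. For (a), `γφ` and `αχ` both map `{X} × ℓ₂` onto the join of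
`(X, B_i)χ` and `(X, B_j)χ`. For (b), `ℓ₂` contains some `B_k` with `k ≠ 0`; `χ` is global,
hence injective, on the plane `ℰ × {B_k}`, so the image of that plane does not lie on a line.
-/
open scoped LinearAlgebra.Projectivization

namespace Projectivization

open Module

variable {K V : Type*} [Field K] [AddCommGroup V] [Module K V]

theorem rep_mem_submodule (x : ℙ K V) : x.rep ∈ x.submodule :=
  x.submodule_eq ▸ Submodule.mem_span_singleton_self _

theorem submodule_le_iff_rep_mem {x : ℙ K V} {U : Submodule K V} :
    x.submodule ≤ U ↔ x.rep ∈ U := by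
  rw [submodule_eq, Submodule.span_singleton_le_iff_mem]

theorem eq_of_submodule_le {x y : ℙ K V} (h : x.submodule ≤ y.submodule) :
    x = y :=
  submodule_injective (Submodule.eq_of_le_of_finrank_eq h (by simp [finrank_submodule]))

theorem finrank_submodule_sup {x y : ℙ K V} (h : x ≠ y) :
    finrank K ↥(x.submodule ⊔ y.submodule) = 2 := by
  rw [submodule_eq, submodule_eq, ← Submodule.span_insert, ← Matrix.range_cons_cons_empty _ _ ![],
    finrank_span_eq_card (linearIndependent_pair_iff_ne.2 h)]
  simp

theorem finrank_submodule_sup_le (x y : ℙ K V) :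
    finrank K ↥(x.submodule ⊔ y.submodule) ≤ 2 := by
  have := Submodule.finrank_sup_add_finrank_inf_eq x.submodule y.submodule
  rw [finrank_submodule, finrank_submodule] at this
  omega

theorem exists_finset_le_iSup_submodule (S : Submodule K V) [FiniteDimensional K S] :
    ∃ s : Finset (ℙ K V), s.card ≤ finrank K S ∧ S ≤ ⨆ x ∈ s, x.submodule := by
  classical
  let b := finBasis K S
  have hb : ∀ i, (b i : V) ≠ 0 := fun i => by simpa using b.ne_zero i
  refine ⟨Finset.univ.image fun i => mk K (b i : V) (hb i),
    Finset.card_image_le.trans (by simp), ?_⟩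
  calc S = Submodule.map S.subtype (Submodule.span K (range b)) := by
        rw [b.span_eq, Submodule.map_subtype_top]
    _ = Submodule.span K (range fun i => (b i : V)) := by
        rw [Submodule.map_span, ← range_comp]; rfl
    _ ≤ ⨆ x ∈ Finset.univ.image fun i => mk K (b i : V) (hb i), x.submodule := by
        refine Submodule.span_le.2 ?_
        rintro _ ⟨i, rfl⟩
        refine le_iSup₂ (f := fun (x : ℙ K V) _ => x.submodule) _ (Finset.mem_image_of_mem _
          (Finset.mem_univ i)) ?_
        rw [submodule_mk]
        exact Submodule.mem_span_singleton_self _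

end Projectivization

namespace Segre

section Semilinear

variable {P Q R : Type*}

@[simp]
theorem mem_mapSet {χ : P → Option Q} {M : Set P} {y : Q} :
    y ∈ mapSet χ M ↔ ∃ X ∈ M, χ X = some y := by
  simp [mapSet, ptImg]

theorem ptImg_eq_singleton {χ : P → Option Q} {X : P} {c : Q} (h : χ X = some c) :
    ptImg χ X = {c} := by
  ext y; simp [ptImg, h, eq_comm]

theorem ptImg_eq_empty {χ : P → Option Q} {X : P} (h : χ X = none) : ptImg χ X = ∅ := by
  ext y; simp [ptImg, h]

theorem mapSet_mono (χ : P → Option Q) {M N : Set P} (h : M ⊆ N) : mapSet χ M ⊆ mapSet χ N :=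
  biUnion_subset_biUnion_left h

theorem mapSet_image (χ : Q → Option R) (f : P → Q) (M : Set P) :
    mapSet χ (f '' M) = mapSet (fun X => χ (f X)) M := by
  ext; simp

theorem mapSet_some (f : P → Q) (M : Set P) : mapSet (fun X => some (f X)) M = f '' M := by
  ext; simp

theorem mapSet_prod_image_right (χ : P × Q → Option R) (f : Q → Q) (M : Set P) (N : Set Q) :
    mapSet (fun p => χ (p.1, f p.2)) (M ×ˢ N) = mapSet χ (M ×ˢ (f '' N)) := by
  rw [← image_id M, ← prodMap_image_prod, mapSet_image, image_id]
  rfl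

theorem mapSet_singleton_prod (χ : P × Q → Option R) (A : P) (M : Set Q) :
    mapSet χ ({A} ×ˢ M) = mapSet (fun Y => χ (A, Y)) M := by
  rw [singleton_prod, mapSet_image]

theorem mapSet_prod_singleton (χ : P × Q → Option R) (M : Set P) (B : Q) :
    mapSet χ (M ×ˢ {B}) = mapSet (fun X => χ (X, B)) M := by
  rw [prod_singleton, mapSet_image]

theorem sJoin_singleton_self (L : Set (Set P)) (x : P) : sJoin L {x} {x} = {x} := by
  ext; simp [sJoin]

theorem sJoin_singleton_of_ne (L : Set (Set P)) {x y : P} (h : x ≠ y) :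
    sJoin L {x} {y} = {x} ∪ {y} ∪ lineThru L x y := by
  ext z
  simp only [sJoin, lineThru, Collin, mem_union, mem_iUnion, mem_singleton_iff, mem_sep_iff]
  grind

variable {L₁ : Set (Set P)} {L₂ : Set (Set Q)} {L' : Set (Set R)}

theorem lineThru_prodLines_mk_left (A : P) {X Y : Q} (h : X ≠ Y) :
    lineThru (prodLines L₁ L₂) (A, X) (A, Y) = {A} ×ˢ lineThru L₂ X Y := by
  ext ⟨B, Z⟩
  simp only [lineThru, prodLines, mem_iUnion, mem_ofPred_eq, mem_prod, mem_singleton_iff]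
  constructor
  · rintro ⟨_, ⟨⟨A', g, hg, rfl⟩ | ⟨g, hg, Y', rfl⟩, ⟨hA, hX⟩, -, hY⟩, hB, hZ⟩
    · exact ⟨hB.trans hA.symm, g, ⟨hg, hX, hY⟩, hZ⟩
    · exact absurd (hX.trans hY.symm) h
  · rintro ⟨rfl, g, ⟨hg, hX, hY⟩, hZ⟩
    exact ⟨{B} ×ˢ g, ⟨Or.inl ⟨B, g, hg, rfl⟩, by simp [hX], by simp [hY]⟩, by simp [hZ]⟩

theorem lineThru_prodLines_mk_right (B : Q) {X Y : P} (h : X ≠ Y) :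
    lineThru (prodLines L₁ L₂) (X, B) (Y, B) = lineThru L₁ X Y ×ˢ {B} := by
  ext ⟨Z, C⟩
  simp only [lineThru, prodLines, mem_iUnion, mem_ofPred_eq, mem_prod, mem_singleton_iff]
  constructor
  · rintro ⟨_, ⟨⟨A', g, hg, rfl⟩ | ⟨g, hg, Y', rfl⟩, ⟨hX, hB⟩, hY, -⟩, hZ, hC⟩
    · exact absurd (hX.trans hY.symm) h
    · exact ⟨⟨g, ⟨hg, hX, hY⟩, hZ⟩, hC.trans hB.symm⟩
  · rintro ⟨⟨g, ⟨hg, hX, hY⟩, hZ⟩, rfl⟩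
    exact ⟨g ×ˢ {C}, ⟨Or.inr ⟨g, hg, C, rfl⟩, by simp [hX], by simp [hY]⟩, by simp [hZ]⟩

theorem sJoin_prodLines_mk_left (A : P) (X Y : Q) :
    sJoin (prodLines L₁ L₂) {(A, X)} {(A, Y)} = {A} ×ˢ sJoin L₂ {X} {Y} := by
  rcases eq_or_ne X Y with rfl | h
  · simp [sJoin_singleton_self]
  · rw [sJoin_singleton_of_ne _ h, sJoin_singleton_of_ne _ (by simpa using h),
      lineThru_prodLines_mk_left A h, prod_union, prod_union, singleton_prod_singleton,
      singleton_prod_singleton]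

theorem sJoin_prodLines_mk_right (B : Q) (X Y : P) :
    sJoin (prodLines L₁ L₂) {(X, B)} {(Y, B)} = sJoin L₁ {X} {Y} ×ˢ {B} := by
  rcases eq_or_ne X Y with rfl | h
  · simp [sJoin_singleton_self]
  · rw [sJoin_singleton_of_ne _ h, sJoin_singleton_of_ne _ (by simpa using h),
      lineThru_prodLines_mk_right B h, union_prod, union_prod, singleton_prod_singleton,
      singleton_prod_singleton]

theorem IsLinMap.curry_left {χ : P × Q → Option R} (hχ : IsLinMap (prodLines L₁ L₂) L' χ)
    (A : P) : IsLinMap L₂ L' (fun Y => χ (A, Y)) := by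
  have hcollin : ∀ {X Y : Q}, Collin L₂ X Y → Collin (prodLines L₁ L₂) (A, X) (A, Y) :=
    fun ⟨g, hg, hX, hY⟩ => ⟨{A} ×ˢ g, Or.inl ⟨A, g, hg, rfl⟩, by simp [hX], by simp [hY]⟩
  refine ⟨fun X Y hXY => ?_, fun X Y hXY hne himg => ?_⟩
  · rw [← mapSet_singleton_prod, ← sJoin_prodLines_mk_left]
    exact hχ.1 _ _ (hcollin hXY)
  · obtain ⟨⟨A', Z⟩, hZ, hZχ⟩ := hχ.2 _ _ (hcollin hXY) (by simpa using hne) himg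
    rw [lineThru_prodLines_mk_left A hne, mem_prod, mem_singleton_iff] at hZ
    exact ⟨Z, hZ.2, hZ.1 ▸ hZχ⟩

theorem IsLinMap.curry_right {χ : P × Q → Option R} (hχ : IsLinMap (prodLines L₁ L₂) L' χ)
    (B : Q) : IsLinMap L₁ L' (fun X => χ (X, B)) := by
  have hcollin : ∀ {X Y : P}, Collin L₁ X Y → Collin (prodLines L₁ L₂) (X, B) (Y, B) :=
    fun ⟨g, hg, hX, hY⟩ => ⟨g ×ˢ {B}, Or.inr ⟨g, hg, B, rfl⟩, by simp [hX], by simp [hY]⟩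
  refine ⟨fun X Y hXY => ?_, fun X Y hXY hne himg => ?_⟩
  · rw [← mapSet_prod_singleton, ← sJoin_prodLines_mk_right]
    exact hχ.1 _ _ (hcollin hXY)
  · obtain ⟨⟨Z, B'⟩, hZ, hZχ⟩ := hχ.2 _ _ (hcollin hXY) (by simpa using hne) himg
    rw [lineThru_prodLines_mk_right B hne, mem_prod, mem_singleton_iff] at hZ
    exact ⟨Z, hZ.1, hZ.2 ▸ hZχ⟩

end Semilinear

section ProjectiveLines

open Module Projectivization

variable {K V : Type*} [Field K] [AddCommGroup V] [Module K V]

@[simp]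
theorem mem_projLineThrough {x y z : ℙ K V} :
    z ∈ projLineThrough x y ↔ z.submodule ≤ x.submodule ⊔ y.submodule := Iff.rfl

theorem left_mem_projLineThrough (x y : ℙ K V) : x ∈ projLineThrough x y :=
  mem_projLineThrough.2 le_sup_left

theorem right_mem_projLineThrough (x y : ℙ K V) : y ∈ projLineThrough x y :=
  mem_projLineThrough.2 le_sup_right

theorem eq_projLineThrough_of_mem {g : Set (ℙ K V)} (hg : g ∈ projLines K V) {x y : ℙ K V}
    (hx : x ∈ g) (hy : y ∈ g) (h : x ≠ y) : g = projLineThrough x y := by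
  obtain ⟨a, b, hab, rfl⟩ := hg
  have : x.submodule ⊔ y.submodule = a.submodule ⊔ b.submodule :=
    Submodule.eq_of_le_of_finrank_le (sup_le hx hy)
      ((finrank_submodule_sup_le a b).trans (finrank_submodule_sup h).ge)
  ext z
  simp [this]

theorem IsCollineation.image_eq_of_mem_of_fixed {α : ℙ K V → ℙ K V}
    (hα : IsCollineation (projLines K V) α) {g : Set (ℙ K V)} (hg : g ∈ projLines K V)
    {x y : ℙ K V} (hx : x ∈ g) (hy : y ∈ g) (h : x ≠ y) (hαx : α x = x) (hαy : α y = y) :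
    α '' g = g :=
  (eq_projLineThrough_of_mem ((hα.2 g).1 hg) ⟨x, hx, hαx⟩ ⟨y, hy, hαy⟩ h).trans
    (eq_projLineThrough_of_mem hg hx hy h).symm

theorem collin_projLines {x y : ℙ K V} (h : x ≠ y) : Collin (projLines K V) x y :=
  ⟨projLineThrough x y, ⟨x, y, h, rfl⟩, left_mem_projLineThrough x y,
    right_mem_projLineThrough x y⟩

theorem lineThru_projLines {x y : ℙ K V} (h : x ≠ y) :
    lineThru (projLines K V) x y = projLineThrough x y := by
  ext z
  simp only [lineThru, mem_iUnion, mem_sep_iff, exists_prop]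
  constructor
  · rintro ⟨g, ⟨hg, hx, hy⟩, hz⟩
    rwa [← eq_projLineThrough_of_mem hg hx hy h]
  · exact fun hz => ⟨_, ⟨⟨x, y, h, rfl⟩, left_mem_projLineThrough x y,
      right_mem_projLineThrough x y⟩, hz⟩

theorem sJoin_projLines_singleton {x y : ℙ K V} (h : x ≠ y) :
    sJoin (projLines K V) {x} {y} = projLineThrough x y := by
  rw [sJoin_singleton_of_ne _ h, lineThru_projLines h, union_eq_right, union_subset_iff,
    singleton_subset_iff, singleton_subset_iff]
  exact ⟨left_mem_projLineThrough x y, right_mem_projLineThrough x y⟩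

theorem le_spanOf {M : Set (ℙ K V)} {x : ℙ K V} (hx : x ∈ M) : x.submodule ≤ spanOf M :=
  le_iSup₂ (f := fun x (_ : x ∈ M) => x.submodule) x hx

theorem spanOf_le {M : Set (ℙ K V)} {U : Submodule K V} (h : ∀ x ∈ M, x.submodule ≤ U) :
    spanOf M ≤ U :=
  iSup₂_le h

theorem spanOf_mono {M N : Set (ℙ K V)} (h : M ⊆ N) : spanOf M ≤ spanOf N :=
  spanOf_le fun _ hx => le_spanOf (h hx)

theorem submodule_le_of_mem_sJoin {M N : Set (ℙ K V)} {z : ℙ K V}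
    (hz : z ∈ sJoin (projLines K V) M N) : z.submodule ≤ spanOf M ⊔ spanOf N := by
  rcases hz with (hz | hz) | hz
  · exact (le_spanOf hz).trans le_sup_left
  · exact (le_spanOf hz).trans le_sup_right
  · simp only [mem_iUnion] at hz
    obtain ⟨x, hx, y, hy, ⟨hxy, -⟩, hz⟩ := hz
    rw [lineThru_projLines hxy, mem_projLineThrough] at hz
    exact hz.trans (sup_le_sup (le_spanOf hx) (le_spanOf hy))

@[simp]
theorem spanOf_empty : spanOf (∅ : Set (ℙ K V)) = ⊥ := by
  rw [spanOf]; simp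

@[simp]
theorem spanOf_singleton (x : ℙ K V) : spanOf {x} = x.submodule := by
  rw [spanOf]; simp

theorem rank_spanOf_ptImg_le_one {P : Type*} (ψ : P → Option (ℙ K V)) (X : P) :
    Module.rank K ↥(spanOf (ptImg ψ X)) ≤ 1 := by
  cases h : ψ X with
  | none => rw [ptImg_eq_empty h, spanOf_empty, rank_bot]; exact zero_le_one
  | some c =>
    rw [ptImg_eq_singleton h, spanOf_singleton, ← finrank_eq_rank, finrank_submodule]
    exact le_of_eq Nat.cast_one

theorem IsPlane.exists_noncollinear {E : Set (ℙ K V)} (hE : IsPlane E) :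
    ∃ x ∈ E, ∃ y ∈ E, ∃ z ∈ E, x ≠ y ∧ z ∉ projLineThrough x y := by
  obtain ⟨S, hS, rfl⟩ := hE
  have : FiniteDimensional K S := Module.finite_of_finrank_eq_succ hS
  let b := finBasisOfFinrankEq K S hS
  have hli : LinearIndependent K fun i => (b i : V) :=
    b.linearIndependent.map' S.subtype S.ker_subtype
  let p i := mk K (b i : V) (hli.ne_zero i)
  have hpS i : (p i).submodule ≤ S := by
    rw [submodule_mk, Submodule.span_singleton_le_iff_mem]; exact (b i).2
  refine ⟨p 0, hpS 0, p 1, hpS 1, p 2, hpS 2, fun h => ?_, fun h => ?_⟩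
  · have h := congrArg Projectivization.submodule h
    simp only [p, submodule_mk] at h
    refine hli.notMem_span_image (s := {1}) (x := 0) (by simp) ?_
    rw [image_singleton, ← h]
    exact Submodule.mem_span_singleton_self _
  · refine hli.notMem_span_image (s := {0, 1}) (x := 2) (by decide) ?_
    rw [mem_projLineThrough, submodule_mk, submodule_mk, submodule_mk,
      Submodule.span_singleton_le_iff_mem, ← Submodule.span_insert] at h
    rwa [image_pair]

end ProjectiveLines

section LinearMap

open Module Projectivization

variable {F V K W Q : Type*} [Field F] [AddCommGroup V] [Module F V]
  [Field K] [AddCommGroup W] [Module K W] {L' : Set (Set Q)}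

theorem IsLinMap.mapSet_projLineThrough {ψ : ℙ F V → Option Q}
    (hψ : IsLinMap (projLines F V) L' ψ) {x y : ℙ F V} (h : x ≠ y) :
    mapSet ψ (projLineThrough x y) = sJoin L' (ptImg ψ x) (ptImg ψ y) := by
  rw [← sJoin_projLines_singleton h]
  exact hψ.1 x y (collin_projLines h)

theorem IsLinMap.eq_of_apply_eq {ψ : ℙ F V → Option Q} (hψ : IsLinMap (projLines F V) L' ψ)
    {x y : ℙ F V} (h : ψ x = ψ y) (hline : ∀ z ∈ projLineThrough x y, ψ z ≠ none) :
    x = y := by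
  by_contra hxy
  obtain ⟨z, hz, hzψ⟩ := hψ.2 x y (collin_projLines hxy) hxy (by rw [ptImg, ptImg, h])
  exact hline z (lineThru_projLines hxy ▸ hz) hzψ

theorem IsLinMap.image_projLineThrough {f : ℙ F V → ℙ K W}
    (hf : IsLinMap (projLines F V) (projLines K W) (fun x => some (f x))) {x y : ℙ F V}
    (h : f x ≠ f y) : f '' projLineThrough x y = projLineThrough (f x) (f y) := by
  rw [← mapSet_some, hf.mapSet_projLineThrough (ne_of_apply_ne f h),
    ptImg_eq_singleton (χ := fun x => some (f x)) rfl,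
    ptImg_eq_singleton (χ := fun x => some (f x)) rfl, sJoin_projLines_singleton h]

end LinearMap

section ProjectiveLinearMap

open Module Projectivization

variable {F V K W : Type*} [Field F] [AddCommGroup V] [Module F V]
  [Field K] [AddCommGroup W] [Module K W] {ψ : ℙ F V → Option (ℙ K W)}

def imageSpan (ψ : ℙ F V → Option (ℙ K W)) (S : Submodule F V) : Submodule K W :=
  spanOf (mapSet ψ {x | x.submodule ≤ S})

theorem imageSpan_mono (ψ : ℙ F V → Option (ℙ K W)) {S T : Submodule F V} (h : S ≤ T) :
    imageSpan ψ S ≤ imageSpan ψ T :=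
  spanOf_mono (mapSet_mono ψ fun _ hx => le_trans hx h)

theorem imageSpan_bot (ψ : ℙ F V → Option (ℙ K W)) : imageSpan ψ ⊥ = ⊥ := by
  have : {x : ℙ F V | x.submodule ≤ ⊥} = ∅ :=
    eq_empty_of_forall_notMem fun x (hx : x.submodule ≤ ⊥) => by
      have := x.finrank_submodule
      rw [le_bot_iff.1 hx, finrank_bot] at this
      exact zero_ne_one this
  rw [imageSpan, this, mapSet, biUnion_empty, spanOf_empty]

theorem IsLinMap.imageSpan_sup_le (hψ : IsLinMap (projLines F V) (projLines K W) ψ)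
    (x : ℙ F V) (S : Submodule F V) :
    imageSpan ψ (x.submodule ⊔ S) ≤ spanOf (ptImg ψ x) ⊔ imageSpan ψ S := by
  refine spanOf_le fun c hc => ?_
  obtain ⟨z, hz, hzc⟩ := mem_mapSet.1 hc
  by_cases hzS : z.submodule ≤ S
  · exact (le_spanOf (mem_mapSet.2 ⟨z, hzS, hzc⟩)).trans le_sup_right
  obtain ⟨p, hp, w, hw, hpw⟩ := Submodule.mem_sup.1 (hz z.rep_mem_submodule)
  by_cases hw0 : w = 0
  · rw [hw0, add_zero] at hpw
    have hzx : z = x := eq_of_submodule_le (submodule_le_iff_rep_mem.2 (hpw ▸ hp))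
    subst hzx
    exact (le_spanOf hzc).trans le_sup_left
  set y := mk F w hw0
  have hyS : y.submodule ≤ S := by
    rw [submodule_mk, Submodule.span_singleton_le_iff_mem]; exact hw
  have hxy : x ≠ y := by
    rintro rfl
    exact hzS (hz.trans (sup_le hyS le_rfl))
  have hzxy : z ∈ projLineThrough x y := by
    rw [mem_projLineThrough, submodule_le_iff_rep_mem, ← hpw]
    exact Submodule.add_mem_sup hp (by rw [submodule_mk]; exact Submodule.mem_span_singleton_self w)
  have hc' : c ∈ sJoin (projLines K W) (ptImg ψ x) (ptImg ψ y) := by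
    rw [← hψ.mapSet_projLineThrough hxy]
    exact mem_mapSet.2 ⟨z, hzxy, hzc⟩
  exact (submodule_le_of_mem_sJoin hc').trans
    (sup_le_sup_left (spanOf_mono fun c hc => mem_mapSet.2 ⟨y, hyS, hc⟩) _)

theorem IsLinMap.rank_imageSpan_le_card (hψ : IsLinMap (projLines F V) (projLines K W) ψ)
    (s : Finset (ℙ F V)) : Module.rank K ↥(imageSpan ψ (⨆ x ∈ s, x.submodule)) ≤ s.card := by
  classical
  induction s using Finset.induction_on with
  | empty => simp [imageSpan_bot]
  | insert a s ha ih =>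
    rw [Finset.iSup_insert, Finset.card_insert_of_notMem ha, Nat.cast_succ, add_comm]
    calc _ ≤ Module.rank K ↥(spanOf (ptImg ψ a) ⊔ imageSpan ψ (⨆ x ∈ s, x.submodule)) :=
          Submodule.rank_mono (hψ.imageSpan_sup_le a _)
      _ ≤ _ := Submodule.rank_add_le_rank_add_rank _ _
      _ ≤ _ := add_le_add (rank_spanOf_ptImg_le_one ψ a) ih

theorem IsLinMap.rank_imageSpan_le_finrank (hψ : IsLinMap (projLines F V) (projLines K W) ψ)
    (S : Submodule F V) [FiniteDimensional F S] :
    Module.rank K ↥(imageSpan ψ S) ≤ finrank F S := by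
  obtain ⟨s, hs, hSs⟩ := exists_finset_le_iSup_submodule S
  exact (Submodule.rank_mono (imageSpan_mono ψ hSs)).trans
    ((hψ.rank_imageSpan_le_card s).trans (by exact_mod_cast hs))

theorem IsLinMap.ne_none_of_finrank_le_rank [FiniteDimensional F V]
    (hψ : IsLinMap (projLines F V) (projLines K W) ψ)
    (hrank : (finrank F V : Cardinal) ≤ Module.rank K ↥(spanOf (mapSet ψ univ))) (x : ℙ F V) :
    ψ x ≠ none := by
  intro hx
  obtain ⟨U, hU⟩ := Submodule.exists_isCompl x.submodule
  have hfinrank := Submodule.finrank_add_eq_of_isCompl hU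
  rw [finrank_submodule] at hfinrank
  have hle : spanOf (mapSet ψ univ) ≤ imageSpan ψ U :=
    calc spanOf (mapSet ψ univ) = imageSpan ψ (x.submodule ⊔ U) := by
          simp [imageSpan, hU.sup_eq_top]
      _ ≤ spanOf (ptImg ψ x) ⊔ imageSpan ψ U := hψ.imageSpan_sup_le x U
      _ = imageSpan ψ U := by rw [ptImg_eq_empty hx, spanOf_empty, bot_sup_eq]
  have := hrank.trans ((Submodule.rank_mono hle).trans (hψ.rank_imageSpan_le_finrank U))
  norm_cast at this
  omega

theorem IsLinMap.two_lt_rank_of_isPlane (hψ : IsLinMap (projLines F V) (projLines K W) ψ)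
    {E : Set (ℙ F V)} (hE : IsPlane E) (hglob : ∀ x ∈ E, ψ x ≠ none) :
    2 < Module.rank K ↥(spanOf (mapSet ψ E)) := by
  obtain ⟨x, hx, y, hy, z, hz, hxy, hzxy⟩ := hE.exists_noncollinear
  have hline : ∀ {a b}, a ∈ E → b ∈ E → projLineThrough a b ⊆ E := by
    obtain ⟨S, -, rfl⟩ := hE
    exact fun ha hb w hw => (mem_projLineThrough.1 hw).trans (sup_le ha hb)
  have hinj : ∀ a ∈ E, ∀ b ∈ E, ψ a = ψ b → a = b :=
    fun a ha b hb h => hψ.eq_of_apply_eq h fun w hw => hglob w (hline ha hb hw)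
  obtain ⟨cx, hcx⟩ := Option.ne_none_iff_exists'.1 (hglob x hx)
  obtain ⟨cy, hcy⟩ := Option.ne_none_iff_exists'.1 (hglob y hy)
  obtain ⟨cz, hcz⟩ := Option.ne_none_iff_exists'.1 (hglob z hz)
  have hcxy : cx ≠ cy := fun h => hxy (hinj x hx y hy (by rw [hcx, hcy, h]))
  have hcE : ∀ {w c}, w ∈ E → ψ w = some c → c.submodule ≤ spanOf (mapSet ψ E) :=
    fun hw hc => le_spanOf (mem_mapSet.2 ⟨_, hw, hc⟩)
  by_contra! hrank
  have : FiniteDimensional K (spanOf (mapSet ψ E)) :=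
    Module.rank_lt_aleph0_iff.1 (hrank.trans_lt (by simp))
  have hspan : cx.submodule ⊔ cy.submodule = spanOf (mapSet ψ E) :=
    Submodule.eq_of_le_of_finrank_le (sup_le (hcE hx hcx) (hcE hy hcy))
      ((finrank_le_of_rank_le (by exact_mod_cast hrank)).trans (finrank_submodule_sup hcxy).ge)
  have hczxy : cz ∈ mapSet ψ (projLineThrough x y) := by
    rw [hψ.mapSet_projLineThrough hxy, ptImg_eq_singleton hcx, ptImg_eq_singleton hcy,
      sJoin_projLines_singleton hcxy, mem_projLineThrough, hspan]
    exact hcE hz hcz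
  obtain ⟨w, hw, hwz⟩ := mem_mapSet.1 hczxy
  obtain rfl : w = z := hinj w (hline hx hy hw) z hz (hwz.trans hcz.symm)
  exact hzxy hw

end ProjectiveLinearMap

end Segre

open Segre Set in
theorem statement_10_general (F : Type*) [Field F] (n m : ℕ)
    (K W : Type*) [Field K] [AddCommGroup W] [Module K W]
    (χ : PGPt F n × PGPt F m → Option (Projectivization K W))
    (hχ : IsLinMap (prodLines (PGLines F n) (PGLines F m)) (projLines K W) χ)
    (B : Fin (m + 1) → PGPt F m) (E : Set (PGPt F n)) (hI : CondI F n m χ B E)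
    (A : PGPt F n) (hII : CondII F n m χ A)
    (γ : PGPt F n × PGPt F m → PGPt F (n * m + n + m))
    (hγ : IsRegularEmbedding F n m γ)
    -- `φ` is a linear map extending `(γ⁻¹χ)` restricted to `(𝒫₁ × 𝓑)γ`
    (φ : PGPt F (n * m + n + m) → Option (Projectivization K W))
    (hφ : IsLinMap (PGLines F (n * m + n + m)) (projLines K W) φ)
    (hext : ∀ (X : PGPt F n) (i : Fin (m + 1)), φ (γ (X, B i)) = χ (X, B i))
    -- `α'` is the collineation of `ℙ₂` with `(A, Xα')χ = (A, X)γφ` for all `X`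
    (α' : PGPt F m → PGPt F m) (hα' : IsCollineation (PGLines F m) α')
    (hdef : ∀ X : PGPt F m, χ (A, α' X) = φ (γ (A, X))) :
    ∀ ℓ₂ ∈ PGLines F m, ∀ i j : Fin (m + 1),
      B i ≠ B j → B i ∈ ℓ₂ → B j ∈ ℓ₂ → SpecialLine F n m χ γ φ α' ℓ₂ := by
  intro ℓ₂ hℓ₂ i j hBij hBi hBj
  have hglobA : ∀ Y, χ (A, Y) ≠ none := (hχ.curry_left A).ne_none_of_finrank_le_rank <| by
    rw [← mapSet_singleton_prod, hII, Module.finrank_fin_fun]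
    norm_cast
  have hfix : ∀ k, α' (B k) = B k := fun k =>
    (hχ.curry_left A).eq_of_apply_eq (by rw [hdef, hext]) fun Y _ => hglobA Y
  have hℓ₂ij : ℓ₂ = projLineThrough (B i) (B j) := eq_projLineThrough_of_mem hℓ₂ hBi hBj hBij
  have hαℓ₂ : α' '' ℓ₂ = ℓ₂ := hα'.image_eq_of_mem_of_fixed hℓ₂ hBi hBj hBij (hfix i) (hfix j)
  refine ⟨hℓ₂, fun X => ?_, ?_⟩
  · have hγne : γ (X, B i) ≠ γ (X, B j) := fun h => hBij (congrArg Prod.snd (hγ.2.1 h))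
    have hγX : (fun Y => γ (X, Y)) '' ℓ₂ = projLineThrough (γ (X, B i)) (γ (X, B j)) :=
      hℓ₂ij ▸ (hγ.1.curry_left X).image_projLineThrough hγne
    rw [mapSet_prod_image_right, hαℓ₂, mapSet_singleton_prod, mapSet_singleton_prod,
      ← mapSet_image, hγX, hφ.mapSet_projLineThrough hγne, hℓ₂ij,
      (hχ.curry_left X).mapSet_projLineThrough hBij]
    simp only [ptImg, hext]
  · obtain ⟨k, hk0, hBk⟩ : ∃ k, k ≠ 0 ∧ B k ∈ ℓ₂ := by
      by_cases hi : i = 0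
      · exact ⟨j, fun hj => hBij (by rw [hi, hj]), hBj⟩
      · exact ⟨i, hi, hBi⟩
    refine ((hχ.curry_right (B k)).two_lt_rank_of_isPlane hI.2.1
      fun X hX => (hI.2.2 k hk0).1 (X, B k) ⟨hX, by simp⟩).trans_le
      (Submodule.rank_mono (spanOf_mono ?_))
    rw [mapSet_prod_image_right, hαℓ₂, ← mapSet_prod_singleton]
    exact mapSet_mono χ (prod_mono (subset_univ E) (singleton_subset_iff.2 hBk))

open Segre Set in
/-- Proposition `speciale`: every line of `ℙ₂` containing two points
of the basis `𝓑` is a special line. -/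
theorem statement_10 (F : Type*) [Field F] (n m : ℕ) (hn : 2 ≤ n) (hm : 1 ≤ m)
    (K W : Type*) [Field K] [AddCommGroup W] [Module K W]
    (χ : PGPt F n × PGPt F m → Option (Projectivization K W))
    (hχ : IsLinMap (prodLines (PGLines F n) (PGLines F m)) (projLines K W) χ)
    (B : Fin (m + 1) → PGPt F m) (E : Set (PGPt F n)) (hI : CondI F n m χ B E)
    (A : PGPt F n) (hII : CondII F n m χ A)
    (γ : PGPt F n × PGPt F m → PGPt F (n * m + n + m))
    (hγ : IsRegularEmbedding F n m γ)
    -- `φ` is a linear map extending `(γ⁻¹χ)` restricted to `(𝒫₁ × 𝓑)γ`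
    (φ : PGPt F (n * m + n + m) → Option (Projectivization K W))
    (hφ : IsLinMap (PGLines F (n * m + n + m)) (projLines K W) φ)
    (hext : ∀ (X : PGPt F n) (i : Fin (m + 1)), φ (γ (X, B i)) = χ (X, B i))
    -- `α'` is the collineation of `ℙ₂` with `(A, Xα')χ = (A, X)γφ` for all `X`
    (α' : PGPt F m → PGPt F m) (hα' : IsCollineation (PGLines F m) α')
    (hdef : ∀ X : PGPt F m, χ (A, α' X) = φ (γ (A, X))) :
    ∀ ℓ₂ ∈ PGLines F m, ∀ i j : Fin (m + 1),
      B i ≠ B j → B i ∈ ℓ₂ → B j ∈ ℓ₂ → SpecialLine F n m χ γ φ α' ℓ₂ :=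
  statement_10_general F n m K W χ hχ B E hI A hII γ hγ φ hφ hext α' hα' hdef
end

section
/- Let χ: ℙ₁ × ℙ₂ → ℙ' be a linear map satisfying conditions (i) and (ii), γ a regular embedding, and let φ, α', α be as described below. Let ℓ₂ be a special line, let X₁ ∈ 𝒫₁ ∖ {A}, and set 𝐀₁ := A(γφ) ∩ (AX₁ × ℓ₂) and 𝐀₂ := A(αχ) ∩ (AX₁ × ℓ₂), where AX₁ is the line of ℙ₁ through A and X₁, A(γφ) := {(X, Y) ∈ 𝒫₁ × 𝒫₂ : ((X, Y)γ)φ = ∅}, and A(αχ) := {(X, Y) ∈ 𝒫₁ × 𝒫₂ : (X, Yα')χ = ∅}. Then 𝐀₁ = 𝐀₂. -/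
open Set

namespace SegreAux

open Segre Projectivization

variable {K V : Type*} [Field K] [AddCommGroup V] [Module K V]

theorem mem_pLT_left {x y : Projectivization K V} : x ∈ projLineThrough x y :=
  (le_sup_left : x.submodule ≤ _)

theorem mem_pLT_right {x y : Projectivization K V} : y ∈ projLineThrough x y :=
  (le_sup_right : y.submodule ≤ _)

theorem pair_indep {x y : Projectivization K V} (h : x ≠ y) :
    LinearIndependent K ![x.rep, y.rep] := by
  rw [LinearIndependent.pair_iff' x.rep_nonzero]
  intro a hax
  apply h
  have ha : a ≠ 0 := by
    rintro rfl
    exact y.rep_nonzero (by simpa using hax.symm)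
  conv_lhs => rw [← x.mk_rep]
  conv_rhs => rw [← y.mk_rep]
  rw [Projectivization.mk_eq_mk_iff']
  exact ⟨a⁻¹, by rw [← hax]; simp [ha]⟩

theorem finrank_sup_eq_two {x y : Projectivization K V} (h : x ≠ y) :
    Module.finrank K ↥(x.submodule ⊔ y.submodule) = 2 := by
  rw [Projectivization.submodule_eq, Projectivization.submodule_eq, ← Submodule.span_union]
  have hr : ({x.rep} ∪ {y.rep} : Set V) = Set.range ![x.rep, y.rep] := by
    ext z; simp [Matrix.range_cons, Matrix.range_empty]
  rw [hr, finrank_span_eq_card (pair_indep h)]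
  simp

theorem pLT_eq_of_mem {u v a b : Projectivization K V} (huv : u ≠ v) (hab : a ≠ b)
    (ha : a ∈ projLineThrough u v) (hb : b ∈ projLineThrough u v) :
    projLineThrough a b = projLineThrough u v := by
  have hle : a.submodule ⊔ b.submodule ≤ u.submodule ⊔ v.submodule := sup_le ha hb
  have he : a.submodule ⊔ b.submodule = u.submodule ⊔ v.submodule :=
    Submodule.eq_of_le_of_finrank_le hle
      (by rw [finrank_sup_eq_two huv, finrank_sup_eq_two hab])
  unfold projLineThrough
  rw [he]

theorem eq_of_submodule_le {x y : Projectivization K V} (h : x.submodule ≤ y.submodule) :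
    x = y := by
  apply Projectivization.submodule_injective
  exact Submodule.eq_of_le_of_finrank_le h
    (by rw [finrank_submodule, finrank_submodule])

theorem exists_third {u v : Projectivization K V} (h : u ≠ v) :
    ∃ w ∈ projLineThrough u v, w ≠ u ∧ w ≠ v := by
  have hind := pair_indep h
  have hind' := pair_indep h.symm
  rw [LinearIndependent.pair_iff' u.rep_nonzero] at hind
  rw [LinearIndependent.pair_iff' v.rep_nonzero] at hind'
  have hne : u.rep + v.rep ≠ 0 := by
    intro h0
    exact hind (-1) (by rw [neg_one_smul, neg_eq_iff_add_eq_zero]; linear_combination (norm := abel) h0)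
  refine ⟨Projectivization.mk K (u.rep + v.rep) hne, ?_, ?_, ?_⟩
  · show (Projectivization.mk K (u.rep + v.rep) hne).submodule ≤ _
    rw [Projectivization.submodule_mk, Projectivization.submodule_eq,
      Projectivization.submodule_eq]
    rw [Submodule.span_singleton_le_iff_mem]
    exact Submodule.add_mem_sup (Submodule.mem_span_singleton_self _)
      (Submodule.mem_span_singleton_self _)
  · intro heq
    have heq2 : Projectivization.mk K (u.rep + v.rep) hne
        = Projectivization.mk K u.rep u.rep_nonzero := heq.trans u.mk_rep.symm
    rw [Projectivization.mk_eq_mk_iff'] at heq2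
    obtain ⟨a, ha⟩ := heq2
    exact hind (a - 1) (by rw [sub_smul, one_smul, ha]; abel)
  · intro heq
    have heq2 : Projectivization.mk K (u.rep + v.rep) hne
        = Projectivization.mk K v.rep v.rep_nonzero := heq.trans v.mk_rep.symm
    rw [Projectivization.mk_eq_mk_iff'] at heq2
    obtain ⟨a, ha⟩ := heq2
    exact hind' (a - 1) (by rw [sub_smul, one_smul, ha]; abel)

theorem line_eq {g : Set (Projectivization K V)} (hg : g ∈ projLines K V) {a b}
    (hab : a ≠ b) (ha : a ∈ g) (hb : b ∈ g) : g = projLineThrough a b := by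
  obtain ⟨u, v, huv, rfl⟩ := hg
  exact (pLT_eq_of_mem huv hab ha hb).symm

theorem pLT_mem_projLines {a b : Projectivization K V} (h : a ≠ b) :
    projLineThrough a b ∈ projLines K V := ⟨a, b, h, rfl⟩

theorem exists_ne_mem_line {g : Set (Projectivization K V)} (hg : g ∈ projLines K V)
    (y : Projectivization K V) : ∃ z ∈ g, z ≠ y := by
  obtain ⟨u, v, huv, rfl⟩ := hg
  by_cases hu : u = y
  · exact ⟨v, mem_pLT_right, by rw [← hu]; exact huv.symm⟩
  · exact ⟨u, mem_pLT_left, hu⟩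

theorem lineThru_proj {a b : Projectivization K V} (h : a ≠ b) :
    lineThru (projLines K V) a b = projLineThrough a b := by
  apply subset_antisymm
  · intro z hz
    simp only [lineThru, mem_iUnion, mem_setOf_eq, exists_prop] at hz
    obtain ⟨g, ⟨hg, hag, hbg⟩, hzg⟩ := hz
    rwa [line_eq hg h hag hbg] at hzg
  · intro z hz
    simp only [lineThru, mem_iUnion, mem_setOf_eq, exists_prop]
    exact ⟨_, ⟨pLT_mem_projLines h, mem_pLT_left, mem_pLT_right⟩, hz⟩

theorem collin_proj {a b : Projectivization K V} (h : a ≠ b) : Collin (projLines K V) a b :=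
  ⟨_, pLT_mem_projLines h, mem_pLT_left, mem_pLT_right⟩

theorem sJoin_singletons {a b : Projectivization K V} (h : a ≠ b) :
    sJoin (projLines K V) {a} {b} = projLineThrough a b := by
  apply subset_antisymm
  · rintro z ((hz | hz) | hz)
    · rw [mem_singleton_iff] at hz; subst hz; exact mem_pLT_left
    · rw [mem_singleton_iff] at hz; subst hz; exact mem_pLT_right
    · simp only [mem_iUnion, mem_singleton_iff, exists_prop] at hz
      obtain ⟨x, rfl, y, rfl, _, hz⟩ := hz
      rwa [lineThru_proj h] at hz
  · intro z hz
    refine Or.inr ?_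
    simp only [mem_iUnion, mem_singleton_iff, exists_prop]
    exact ⟨a, rfl, b, rfl, ⟨h, collin_proj h⟩, by rwa [lineThru_proj h]⟩

theorem sJoin_empty_left {Q : Type*} (L : Set (Set Q)) (M : Set Q) : sJoin L ∅ M = M := by
  simp [sJoin]

theorem sJoin_empty_right {Q : Type*} (L : Set (Set Q)) (M : Set Q) : sJoin L M ∅ = M := by
  simp [sJoin]

theorem sJoin_singleton_same {Q : Type*} (L : Set (Set Q)) (a : Q) :
    sJoin L {a} {a} = {a} := by
  apply subset_antisymm
  · rintro z ((hz | hz) | hz)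
    · exact hz
    · exact hz
    · simp only [mem_iUnion, mem_singleton_iff, exists_prop] at hz
      obtain ⟨x, rfl, y, rfl, ⟨hne, _⟩, _⟩ := hz
      exact absurd rfl hne
  · intro z hz
    exact Or.inl (Or.inl hz)

theorem sub_le_of_mem_sJoin {a b z : Projectivization K V}
    (hz : z ∈ sJoin (projLines K V) {a} {b}) :
    z.submodule ≤ a.submodule ⊔ b.submodule := by
  by_cases h : a = b
  · subst h
    rw [sJoin_singleton_same] at hz
    rw [mem_singleton_iff] at hz; subst hz
    exact le_sup_left
  · rw [sJoin_singletons h] at hz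
    exact hz

end SegreAux

namespace SegreAux

open Segre Projectivization

-- ======== ptImg / mapSet helpers ========
section Maps
variable {P Q : Type*}

theorem ptImg_some {χ : P → Option Q} {p : P} {c : Q} (h : χ p = some c) :
    ptImg χ p = {c} := by
  ext y; simp [ptImg, h, eq_comm]

theorem ptImg_none {χ : P → Option Q} {p : P} (h : χ p = none) : ptImg χ p = ∅ := by
  ext y; simp [ptImg, h]

theorem mem_ptImg_iff {χ : P → Option Q} {p : P} {c : Q} :
    c ∈ ptImg χ p ↔ χ p = some c := Iff.rfl

theorem ptImg_unique {χ : P → Option Q} {p : P} {a b : Q}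
    (ha : a ∈ ptImg χ p) (hb : b ∈ ptImg χ p) : a = b := by
  rw [mem_ptImg_iff] at ha hb
  rw [ha] at hb
  exact Option.some_inj.mp hb

theorem mem_mapSet {χ : P → Option Q} {M : Set P} {p : P} {c : Q}
    (hp : p ∈ M) (h : χ p = some c) : c ∈ mapSet χ M := by
  simp only [mapSet, mem_iUnion, exists_prop]
  exact ⟨p, hp, h⟩

theorem exists_of_mem_mapSet {χ : P → Option Q} {M : Set P} {c : Q}
    (h : c ∈ mapSet χ M) : ∃ p ∈ M, χ p = some c := by
  simp only [mapSet, mem_iUnion, exists_prop] at h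
  exact h

theorem ptImg_subset_mapSet {χ : P → Option Q} {M : Set P} {p : P} (hp : p ∈ M) :
    ptImg χ p ⊆ mapSet χ M := by
  intro c hc
  exact mem_mapSet hp hc

theorem mapSet_comp {P' : Type*} (χ : P' → Option Q) (f : P → P') (M : Set P) :
    mapSet (fun p => χ (f p)) M = mapSet χ (f '' M) := by
  unfold mapSet
  rw [Set.biUnion_image]
  rfl

theorem mapSet_some {P' : Type*} (γ : P → P') (M : Set P) :
    mapSet (fun p => some (γ p)) M = γ '' M := by
  ext y
  simp only [mapSet, ptImg, mem_iUnion, mem_setOf_eq, exists_prop, Option.some_inj,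
    Set.mem_image]

end Maps

-- ======== product lines ========
section Prod

variable {F : Type*} [Field F] {n m : ℕ}
variable {K W : Type*} [Field K] [AddCommGroup W] [Module K W]

local notation "P₁" => Projectivization F (Fin (n + 1) → F)
local notation "P₂" => Projectivization F (Fin (m + 1) → F)
local notation "LL" => prodLines (projLines F (Fin (n + 1) → F)) (projLines F (Fin (m + 1) → F))

theorem vert_mem {X : P₁} {g₂ : Set P₂} (h : g₂ ∈ projLines F (Fin (m + 1) → F)) :
    ({X} ×ˢ g₂ : Set (P₁ × P₂)) ∈ LL := Or.inl ⟨X, g₂, h, rfl⟩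

theorem horiz_mem {g₁ : Set P₁} (h : g₁ ∈ projLines F (Fin (n + 1) → F)) (Z : P₂) :
    (g₁ ×ˢ {Z} : Set (P₁ × P₂)) ∈ LL := Or.inr ⟨g₁, h, Z, rfl⟩

theorem prod_line_unique {s t : Set (P₁ × P₂)} (hs : s ∈ LL) (ht : t ∈ LL)
    {p q : P₁ × P₂} (hpq : p ≠ q) (hps : p ∈ s) (hqs : q ∈ s) (hpt : p ∈ t) (hqt : q ∈ t) :
    s = t := by
  obtain ⟨X, g₂, hg₂, rfl⟩ | ⟨g₁, hg₁, Z, rfl⟩ := hs <;>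
    obtain ⟨X', g₂', hg₂', rfl⟩ | ⟨g₁', hg₁', Z', rfl⟩ := ht
  · obtain ⟨hps1, hps2⟩ := hps
    obtain ⟨hqs1, hqs2⟩ := hqs
    obtain ⟨hpt1, hpt2⟩ := hpt
    obtain ⟨hqt1, hqt2⟩ := hqt
    rw [mem_singleton_iff] at hps1 hqs1 hpt1 hqt1
    have h2 : p.2 ≠ q.2 := by
      intro h2; exact hpq (Prod.ext (hps1.trans hqs1.symm) h2)
    rw [hpt1.symm.trans hps1]
    rw [line_eq hg₂ h2 hps2 hqs2, line_eq hg₂' h2 hpt2 hqt2]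
  · exfalso
    obtain ⟨hps1, hps2⟩ := hps
    obtain ⟨hqs1, hqs2⟩ := hqs
    obtain ⟨hpt1, hpt2⟩ := hpt
    obtain ⟨hqt1, hqt2⟩ := hqt
    rw [mem_singleton_iff] at hps1 hqs1 hpt2 hqt2
    exact hpq (Prod.ext (hps1.trans hqs1.symm) (hpt2.trans hqt2.symm))
  · exfalso
    obtain ⟨hps1, hps2⟩ := hps
    obtain ⟨hqs1, hqs2⟩ := hqs
    obtain ⟨hpt1, hpt2⟩ := hpt
    obtain ⟨hqt1, hqt2⟩ := hqt
    rw [mem_singleton_iff] at hps2 hqs2 hpt1 hqt1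
    exact hpq (Prod.ext (hpt1.trans hqt1.symm) (hps2.trans hqs2.symm))
  · obtain ⟨hps1, hps2⟩ := hps
    obtain ⟨hqs1, hqs2⟩ := hqs
    obtain ⟨hpt1, hpt2⟩ := hpt
    obtain ⟨hqt1, hqt2⟩ := hqt
    rw [mem_singleton_iff] at hps2 hqs2 hpt2 hqt2
    have h1 : p.1 ≠ q.1 := by
      intro h1; exact hpq (Prod.ext h1 (hps2.trans hqs2.symm))
    rw [hpt2.symm.trans hps2]
    rw [line_eq hg₁ h1 hps1 hqs1, line_eq hg₁' h1 hpt1 hqt1]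

theorem lineThru_prod {s : Set (P₁ × P₂)} (hs : s ∈ LL) {p q : P₁ × P₂}
    (hpq : p ≠ q) (hp : p ∈ s) (hq : q ∈ s) :
    lineThru LL p q = s := by
  apply subset_antisymm
  · intro z hz
    simp only [lineThru, mem_iUnion, mem_setOf_eq, exists_prop] at hz
    obtain ⟨g, ⟨hg, hpg, hqg⟩, hzg⟩ := hz
    rwa [prod_line_unique hg hs hpq hpg hqg hp hq] at hzg
  · intro z hz
    simp only [lineThru, mem_iUnion, mem_setOf_eq, exists_prop]
    exact ⟨s, ⟨hs, hp, hq⟩, hz⟩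

theorem sJoin_pair_prod {s : Set (P₁ × P₂)} (hs : s ∈ LL) {p q : P₁ × P₂}
    (hpq : p ≠ q) (hp : p ∈ s) (hq : q ∈ s) :
    sJoin LL {p} {q} = s := by
  apply subset_antisymm
  · rintro z ((hz | hz) | hz)
    · rw [mem_singleton_iff] at hz; subst hz; exact hp
    · rw [mem_singleton_iff] at hz; subst hz; exact hq
    · simp only [mem_iUnion, mem_singleton_iff, exists_prop] at hz
      obtain ⟨x, rfl, y, rfl, _, hz⟩ := hz
      rwa [lineThru_prod hs hpq hp hq] at hz
  · intro z hz
    refine Or.inr ?_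
    simp only [mem_iUnion, mem_singleton_iff, exists_prop]
    exact ⟨p, rfl, q, rfl, ⟨hpq, ⟨s, hs, hp, hq⟩⟩, by rwa [lineThru_prod hs hpq hp hq]⟩

end Prod

end SegreAux

namespace SegreAux

open Segre Projectivization

section GoodMaps

variable {F : Type*} [Field F] {n m : ℕ}
variable {K W : Type*} [Field K] [AddCommGroup W] [Module K W]

local notation "P₁" => Projectivization F (Fin (n + 1) → F)
local notation "P₂" => Projectivization F (Fin (m + 1) → F)
local notation "LL" => prodLines (projLines F (Fin (n + 1) → F)) (projLines F (Fin (m + 1) → F))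
local notation "TT" => Projectivization K W
local notation "LT" => projLines K W

/-- The two consequences of linearity that we use, for a partial map on the product. -/
structure Good (ψ : P₁ × P₂ → Option TT) : Prop where
  g1 : ∀ s ∈ LL, ∀ p q : P₁ × P₂, p ∈ s → q ∈ s → p ≠ q →
      mapSet ψ s = sJoin LT (ptImg ψ p) (ptImg ψ q)
  g2 : ∀ s ∈ LL, ∀ p q : P₁ × P₂, p ∈ s → q ∈ s → p ≠ q →
      ptImg ψ p = ptImg ψ q → ∃ r ∈ s, ψ r = none

theorem good_of_isLinMap {ψ : P₁ × P₂ → Option TT} (h : IsLinMap LL LT ψ) : Good ψ := by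
  constructor
  · intro s hs p q hp hq hpq
    have h1 := h.1 p q ⟨s, hs, hp, hq⟩
    rwa [sJoin_pair_prod hs hpq hp hq] at h1
  · intro s hs p q hp hq hpq heq
    obtain ⟨r, hr, hrn⟩ := h.2 p q ⟨s, hs, hp, hq⟩ hpq heq
    rw [lineThru_prod hs hpq hp hq] at hr
    exact ⟨r, hr, hrn⟩

/-- one exceptional point on a line: the image of the line is the image of any other point. -/
theorem const_line {ψ : P₁ × P₂ → Option TT} (hG : Good ψ) {s : Set (P₁ × P₂)} (hs : s ∈ LL)
    {p q : P₁ × P₂} (hp : p ∈ s) (hq : q ∈ s) (hqp : q ≠ p) (hnone : ψ p = none) :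
    mapSet ψ s = ptImg ψ q := by
  rw [hG.g1 s hs p q hp hq hqp.symm, ptImg_none hnone, sJoin_empty_left]

theorem const_line_val {ψ : P₁ × P₂ → Option TT} (hG : Good ψ) {s : Set (P₁ × P₂)}
    (hs : s ∈ LL) {p q r : P₁ × P₂} (hp : p ∈ s) (hq : q ∈ s) (hr : r ∈ s)
    (hqp : q ≠ p) (hrp : r ≠ p) (hnone : ψ p = none) {ξ : TT} (hqv : ψ q = some ξ) :
    ψ r = some ξ := by
  have h1 := const_line hG hs hp hq hqp hnone
  have h2 := const_line hG hs hp hr hrp hnone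
  have h3 : ptImg ψ r = {ξ} := by rw [← h2, h1, ptImg_some hqv]
  rw [← mem_ptImg_iff, h3]
  rfl

end GoodMaps

end SegreAux

namespace SegreAux

open Segre Projectivization

section Transfer

variable {F : Type*} [Field F] {n m : ℕ}
variable {K W : Type*} [Field K] [AddCommGroup W] [Module K W]

local notation "P₁" => Projectivization F (Fin (n + 1) → F)
local notation "P₂" => Projectivization F (Fin (m + 1) → F)
local notation "LL" => prodLines (projLines F (Fin (n + 1) → F)) (projLines F (Fin (m + 1) → F))
local notation "TT" => Projectivization K W
local notation "LT" => projLines K W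

theorem image_vert (α' : P₂ → P₂) (X : P₁) (g₂ : Set P₂) :
    (fun p : P₁ × P₂ => (p.1, α' p.2)) '' (({X} : Set P₁) ×ˢ g₂)
      = ({X} : Set P₁) ×ˢ (α' '' g₂) := by
  ext ⟨a, b⟩
  simp only [Set.mem_image, Set.mem_prod, mem_singleton_iff, Prod.mk.injEq, Prod.exists]
  constructor
  · rintro ⟨x, y, ⟨rfl, hy⟩, rfl, rfl⟩; exact ⟨rfl, y, hy, rfl⟩
  · rintro ⟨rfl, y, hy, rfl⟩; exact ⟨a, y, ⟨rfl, hy⟩, rfl, rfl⟩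

theorem image_horiz (α' : P₂ → P₂) (g₁ : Set P₁) (Z : P₂) :
    (fun p : P₁ × P₂ => (p.1, α' p.2)) '' (g₁ ×ˢ ({Z} : Set P₂))
      = g₁ ×ˢ ({α' Z} : Set P₂) := by
  ext ⟨a, b⟩
  simp only [Set.mem_image, Set.mem_prod, mem_singleton_iff, Prod.mk.injEq, Prod.exists]
  constructor
  · rintro ⟨x, y, ⟨hx, rfl⟩, rfl, rfl⟩; exact ⟨hx, rfl⟩
  · rintro ⟨ha, rfl⟩; exact ⟨a, Z, ⟨ha, rfl⟩, rfl, rfl⟩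

theorem good_b {χ : P₁ × P₂ → Option TT} (hχ : IsLinMap LL LT χ)
    {α' : P₂ → P₂} (hinj : Function.Injective α')
    (hlines : ∀ g : Set P₂, g ∈ projLines F (Fin (m + 1) → F) →
      α' '' g ∈ projLines F (Fin (m + 1) → F)) :
    Good (fun p : P₁ × P₂ => χ (p.1, α' p.2)) := by
  have hGχ := good_of_isLinMap hχ
  have hfinj : Function.Injective (fun p : P₁ × P₂ => (p.1, α' p.2)) := by
    rintro ⟨a, b⟩ ⟨c, d⟩ h
    simp only [Prod.mk.injEq] at h
    exact Prod.ext h.1 (hinj h.2)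
  have him : ∀ s ∈ LL, (fun p : P₁ × P₂ => (p.1, α' p.2)) '' s ∈ LL := by
    rintro s (⟨X, g₂, hg₂, rfl⟩ | ⟨g₁, hg₁, Z, rfl⟩)
    · rw [image_vert]; exact vert_mem (hlines _ hg₂)
    · rw [image_horiz]; exact horiz_mem hg₁ _
  constructor
  · intro s hs p q hp hq hpq
    have h1 := hGχ.g1 _ (him s hs) ((fun p : P₁ × P₂ => (p.1, α' p.2)) p)
      ((fun p : P₁ × P₂ => (p.1, α' p.2)) q) (mem_image_of_mem _ hp)
      (mem_image_of_mem _ hq) (fun h => hpq (hfinj h))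
    rw [← mapSet_comp χ (fun p : P₁ × P₂ => (p.1, α' p.2)) s] at h1
    exact h1
  · intro s hs p q hp hq hpq heq
    obtain ⟨r', hr', hrn⟩ := hGχ.g2 _ (him s hs) ((fun p : P₁ × P₂ => (p.1, α' p.2)) p)
      ((fun p : P₁ × P₂ => (p.1, α' p.2)) q) (mem_image_of_mem _ hp)
      (mem_image_of_mem _ hq) (fun h => hpq (hfinj h)) heq
    obtain ⟨r, hrs, rfl⟩ := hr'
    exact ⟨r, hrs, hrn⟩

theorem good_a {K2 V2 : Type*} [Field K2] [AddCommGroup V2] [Module K2 V2]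
    {γ : P₁ × P₂ → Projectivization K2 V2}
    (hγlin : IsLinMap LL (projLines K2 V2) (fun p => some (γ p)))
    (hγinj : Function.Injective γ)
    {φ : Projectivization K2 V2 → Option TT}
    (hφ : IsLinMap (projLines K2 V2) LT φ) :
    Good (fun p : P₁ × P₂ => φ (γ p)) := by
  have himg : ∀ s ∈ LL, ∀ p q : P₁ × P₂, p ∈ s → q ∈ s → p ≠ q →
      γ '' s = projLineThrough (γ p) (γ q) := by
    intro s hs p q hp hq hpq
    have h1 := hγlin.1 p q ⟨s, hs, hp, hq⟩
    rw [sJoin_pair_prod hs hpq hp hq, mapSet_some] at h1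
    rw [ptImg_some (χ := fun p : P₁ × P₂ => some (γ p)) (p := p) (c := γ p) rfl,
      ptImg_some (χ := fun p : P₁ × P₂ => some (γ p)) (p := q) (c := γ q) rfl,
      sJoin_singletons (fun h => hpq (hγinj h))] at h1
    exact h1
  constructor
  · intro s hs p q hp hq hpq
    have hne : γ p ≠ γ q := fun h => hpq (hγinj h)
    have h2 := hφ.1 (γ p) (γ q) (collin_proj hne)
    rw [sJoin_singletons hne, ← himg s hs p q hp hq hpq,
      ← mapSet_comp φ γ s] at h2
    exact h2
  · intro s hs p q hp hq hpq heq
    have hne : γ p ≠ γ q := fun h => hpq (hγinj h)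
    obtain ⟨r', hr', hrn⟩ := hφ.2 (γ p) (γ q) (collin_proj hne) hne heq
    rw [lineThru_proj hne, ← himg s hs p q hp hq hpq] at hr'
    obtain ⟨r, hrs, rfl⟩ := hr'
    exact ⟨r, hrs, hrn⟩

end Transfer

end SegreAux

namespace SegreAux

open Segre Projectivization

section Decomp

variable {K V : Type*} [Field K] [AddCommGroup V] [Module K V]

theorem rep_mem_submodule (z : Projectivization K V) : z.rep ∈ z.submodule := by
  rw [Projectivization.submodule_eq]
  exact Submodule.mem_span_singleton_self _

theorem point_decomp {v : V} (hv : v ≠ 0) {S : Submodule K V}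
    {z : Projectivization K V}
    (hz : z.submodule ≤ Submodule.span K {v} ⊔ S) :
    z = Projectivization.mk K v hv ∨ z.submodule ≤ S ∨
      ∃ z' : Projectivization K V, z'.submodule ≤ S ∧ z' ≠ Projectivization.mk K v hv ∧
        z ∈ projLineThrough (Projectivization.mk K v hv) z' := by
  have hrep : z.rep ∈ Submodule.span K {v} ⊔ S := hz (rep_mem_submodule z)
  rw [Submodule.mem_sup] at hrep
  obtain ⟨a, ha, b, hb, hab⟩ := hrep
  rw [Submodule.mem_span_singleton] at ha
  obtain ⟨c, rfl⟩ := ha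
  by_cases hb0 : b = 0
  · left
    subst hb0
    rw [add_zero] at hab
    have hc : c ≠ 0 := by
      rintro rfl
      exact z.rep_nonzero (by rw [← hab, zero_smul])
    have : Projectivization.mk K z.rep z.rep_nonzero = Projectivization.mk K v hv := by
      rw [Projectivization.mk_eq_mk_iff']
      exact ⟨c, hab⟩
    rw [← z.mk_rep]
    exact this
  · by_cases hc0 : c = 0
    · right; left
      rw [Projectivization.submodule_eq, Submodule.span_singleton_le_iff_mem]
      rw [← hab, hc0, zero_smul, zero_add]
      exact hb
    · set z' := Projectivization.mk K b hb0 with hz'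
      by_cases hz'v : z' = Projectivization.mk K v hv
      · right; left
        have hbv : b ∈ Submodule.span K {v} := by
          have h1 : z'.submodule = (Projectivization.mk K v hv).submodule := by rw [hz'v]
          rw [hz', Projectivization.submodule_mk, Projectivization.submodule_mk] at h1
          rw [← h1]
          exact Submodule.mem_span_singleton_self _
        rw [Submodule.mem_span_singleton] at hbv
        obtain ⟨d, hd⟩ := hbv
        -- v ∈ S? no: b ∈ S and b = d • v with b ≠ 0 so v ∈ S
        have hd0 : d ≠ 0 := by rintro rfl; rw [zero_smul] at hd; exact hb0 hd.symm
        have hvS : v ∈ S := by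
          have : d⁻¹ • b = v := by rw [← hd, smul_smul, inv_mul_cancel₀ hd0, one_smul]
          rw [← this]
          exact Submodule.smul_mem _ _ hb
        rw [Projectivization.submodule_eq, Submodule.span_singleton_le_iff_mem, ← hab]
        exact Submodule.add_mem _ (Submodule.smul_mem _ _ hvS) hb
      · right; right
        refine ⟨z', ?_, hz'v, ?_⟩
        · rw [hz', Projectivization.submodule_mk, Submodule.span_singleton_le_iff_mem]
          exact hb
        · show z.submodule ≤ _
          rw [Projectivization.submodule_eq, Submodule.span_singleton_le_iff_mem, ← hab]
          exact Submodule.add_mem_sup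
            (Submodule.smul_mem _ _ (by
              rw [Projectivization.submodule_mk]
              exact Submodule.mem_span_singleton_self _))
            (by rw [hz', Projectivization.submodule_mk]
                exact Submodule.mem_span_singleton_self _)

end Decomp

end SegreAux

namespace SegreAux

open Segre Projectivization

section CondIIConseq

variable {F : Type*} [Field F] {n m : ℕ}
variable {K W : Type*} [Field K] [AddCommGroup W] [Module K W]

local notation "P₁" => Projectivization F (Fin (n + 1) → F)
local notation "P₂" => Projectivization F (Fin (m + 1) → F)
local notation "LL" => prodLines (projLines F (Fin (n + 1) → F)) (projLines F (Fin (m + 1) → F))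
local notation "TT" => Projectivization K W

theorem mem_vert_prod {A : P₁} {S : Set P₂} {z : P₂} (hz : z ∈ S) :
    ((A, z) : P₁ × P₂) ∈ (({A} : Set P₁) ×ˢ S) :=
  Set.mem_prod.mpr ⟨rfl, hz⟩

theorem mem_horiz_prod {S : Set P₁} {X : P₁} {Z : P₂} (hX : X ∈ S) :
    ((X, Z) : P₁ × P₂) ∈ (S ×ˢ ({Z} : Set P₂)) :=
  Set.mem_prod.mpr ⟨hX, rfl⟩

theorem mapSet_vert (χ : P₁ × P₂ → Option TT) (A : P₁) (S : Set P₂) :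
    mapSet χ (({A} : Set P₁) ×ˢ S) = mapSet (fun z : P₂ => χ (A, z)) S := by
  have himg : (({A} : Set P₁) ×ˢ S) = (fun z : P₂ => ((A, z) : P₁ × P₂)) '' S := by
    ext q
    constructor
    · rintro ⟨ha, hb⟩
      rw [mem_singleton_iff] at ha
      exact ⟨q.2, hb, Prod.ext ha.symm rfl⟩
    · rintro ⟨y, hy, rfl⟩
      exact mem_vert_prod hy
  rw [himg, ← mapSet_comp]

theorem col_span_bound {χ : P₁ × P₂ → Option TT} (hG : Good χ) (A : P₁)
    (vs : Finset (Fin (m + 1) → F)) :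
    ∃ ts : Finset W, ts.card ≤ vs.card ∧
      ∀ ξ ∈ mapSet (fun z : P₂ => χ (A, z))
          {z : P₂ | z.submodule ≤ Submodule.span F (vs : Set (Fin (m + 1) → F))},
        ξ.submodule ≤ Submodule.span K (ts : Set W) := by
  classical
  induction vs using Finset.induction_on with
  | empty =>
    refine ⟨∅, le_rfl, ?_⟩
    intro ξ hξ
    exfalso
    obtain ⟨z, hz, -⟩ := exists_of_mem_mapSet hξ
    simp only [Finset.coe_empty, Submodule.span_empty, mem_setOf_eq] at hz
    exact z.rep_nonzero (by simpa using hz (rep_mem_submodule z))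
  | @insert v s hvs ih =>
    obtain ⟨ts, hcard, hts⟩ := ih
    have hcard' : ts.card ≤ (insert v s).card := by
      rw [Finset.card_insert_of_notMem hvs]; omega
    by_cases hv0 : v = 0
    · refine ⟨ts, hcard', ?_⟩
      intro ξ hξ
      apply hts
      have hsp : Submodule.span F (((insert v s : Finset _) : Set (Fin (m + 1) → F)))
          = Submodule.span F (s : Set (Fin (m + 1) → F)) := by
        rw [Finset.coe_insert, hv0, Submodule.span_insert_zero]
      rwa [hsp] at hξ
    · -- main case
      have key : ∀ (B : Submodule K W),
          (∀ η : TT, χ (A, Projectivization.mk F v hv0) = some η → η.submodule ≤ B) →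
          Submodule.span K (ts : Set W) ≤ B →
          ∀ ξ ∈ mapSet (fun z : P₂ => χ (A, z))
            {z : P₂ | z.submodule ≤
              Submodule.span F (((insert v s : Finset _) : Set (Fin (m + 1) → F)))},
            ξ.submodule ≤ B := by
        intro B hB1 hB2 ξ hξ
        obtain ⟨z, hz, hzv⟩ := exists_of_mem_mapSet hξ
        simp only [mem_setOf_eq, Finset.coe_insert, Submodule.span_insert] at hz
        rcases point_decomp hv0 hz with rfl | hzS | ⟨z', hz'S, hz'p, hline⟩
        · exact hB1 ξ hzv
        · exact (hts ξ (mem_mapSet hzS hzv)).trans hB2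
        · set p : P₂ := Projectivization.mk F v hv0
          have hpne : p ≠ z' := Ne.symm hz'p
          have hz'S' : z' ∈ {z : P₂ | z.submodule ≤ Submodule.span F (s : Set _)} := hz'S
          have hl1 := hG.g1 (({A} : Set P₁) ×ˢ projLineThrough p z')
            (vert_mem (pLT_mem_projLines hpne)) (A, p) (A, z')
            (mem_vert_prod mem_pLT_left) (mem_vert_prod mem_pLT_right)
            (fun h => hpne (congrArg Prod.snd h))
          have hmem : ξ ∈ mapSet χ (({A} : Set P₁) ×ˢ projLineThrough p z') :=
            mem_mapSet (mem_vert_prod hline) hzv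
          rw [hl1] at hmem
          rcases h1 : χ (A, p) with _ | a
          · rw [ptImg_none h1, sJoin_empty_left] at hmem
            exact (hts ξ (mem_mapSet hz'S' hmem)).trans hB2
          · rcases h2 : χ (A, z') with _ | b
            · rw [ptImg_some h1, ptImg_none h2, sJoin_empty_right] at hmem
              rw [mem_singleton_iff] at hmem; subst hmem
              exact hB1 _ h1
            · rw [ptImg_some h1, ptImg_some h2] at hmem
              have hsub := sub_le_of_mem_sJoin hmem
              have hbB : b.submodule ≤ B :=
                (hts b (mem_mapSet hz'S' h2)).trans hB2
              exact hsub.trans (sup_le (hB1 a h1) hbB)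
      rcases himg : χ (A, Projectivization.mk F v hv0) with _ | ξ₀
      · refine ⟨ts, hcard', ?_⟩
        exact key _ (fun η hη => by rw [himg] at hη; cases hη) le_rfl
      · refine ⟨insert ξ₀.rep ts, ?_, ?_⟩
        · calc (insert ξ₀.rep ts).card ≤ ts.card + 1 := Finset.card_insert_le _ _
            _ ≤ s.card + 1 := by omega
            _ = (insert v s).card := (Finset.card_insert_of_notMem hvs).symm
        · refine key _ ?_ ?_
          · intro η hη
            rw [himg] at hη
            have : η = ξ₀ := Option.some_inj.mp hη.symm
            subst this
            rw [Projectivization.submodule_eq]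
            apply Submodule.span_mono
            intro x hx
            rw [mem_singleton_iff] at hx
            subst hx
            exact Finset.mem_coe.mpr (Finset.mem_insert_self _ _)
          · apply Submodule.span_mono
            intro x hx
            exact Finset.mem_coe.mpr (Finset.mem_insert_of_mem (Finset.mem_coe.mp hx))

end CondIIConseq

end SegreAux

namespace SegreAux

open Segre Projectivization

section CondIIFinal

variable {F : Type*} [Field F] {n m : ℕ}
variable {K W : Type*} [Field K] [AddCommGroup W] [Module K W]

local notation "P₁" => Projectivization F (Fin (n + 1) → F)
local notation "P₂" => Projectivization F (Fin (m + 1) → F)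
local notation "TT" => Projectivization K W

theorem colA_not_none {χ : P₁ × P₂ → Option TT} (hG : Good χ) {A : P₁}
    (hII : Module.rank K ↥(spanOf (mapSet χ (({A} : Set P₁) ×ˢ (univ : Set P₂))))
        = (m : Cardinal) + 1) :
    ∀ z : P₂, χ (A, z) ≠ none := by
  intro u hu
  obtain ⟨i, hi⟩ : ∃ i, u.rep i ≠ 0 := by
    by_contra hc; push_neg at hc
    exact u.rep_nonzero (funext fun i => hc i)
  set f : (Fin (m + 1) → F) →ₗ[F] F := (u.rep i)⁻¹ • LinearMap.proj i with hf
  have hfu : f u.rep = 1 := by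
    rw [hf]
    simp only [LinearMap.smul_apply, LinearMap.proj_apply, smul_eq_mul]
    exact inv_mul_cancel₀ hi
  have hfinrank : Module.finrank F (LinearMap.ker f) = m := by
    have hr := LinearMap.finrank_range_add_finrank_ker f
    have hrange : LinearMap.range f = ⊤ := by
      rw [LinearMap.range_eq_top]
      intro c
      exact ⟨c • u.rep, by rw [map_smul, hfu, smul_eq_mul, mul_one]⟩
    rw [hrange, finrank_top, Module.finrank_self,
      Module.finrank_fintype_fun_eq_card, Fintype.card_fin] at hr
    omega
  classical
  set b := Module.finBasis F ↥(LinearMap.ker f) with hb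
  set vs : Finset (Fin (m + 1) → F) :=
    Finset.image (fun j => ((b j : LinearMap.ker f) : Fin (m + 1) → F)) Finset.univ with hvs
  have hspan : Submodule.span F (vs : Set (Fin (m + 1) → F)) = LinearMap.ker f := by
    have h1 : (vs : Set (Fin (m + 1) → F))
        = (LinearMap.ker f).subtype '' Set.range b := by
      rw [hvs, Finset.coe_image, Finset.coe_univ, Set.image_univ, ← Set.range_comp]
      rfl
    rw [h1, ← Submodule.map_span, b.span_eq, Submodule.map_subtype_top]
  have hcard : vs.card ≤ m := by
    calc vs.card ≤ Finset.univ.card := Finset.card_image_le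
      _ = Module.finrank F (LinearMap.ker f) := by simp
      _ = m := hfinrank
  obtain ⟨ts, htscard, hts⟩ := col_span_bound hG A vs
  have hincl : ∀ ξ ∈ mapSet (fun z : P₂ => χ (A, z)) (univ : Set P₂),
      ξ ∈ mapSet (fun z : P₂ => χ (A, z))
        {z : P₂ | z.submodule ≤ Submodule.span F (vs : Set (Fin (m + 1) → F))} := by
    intro ξ hξ
    obtain ⟨z, -, hzv⟩ := exists_of_mem_mapSet hξ
    rw [show {z : P₂ | z.submodule ≤ Submodule.span F (vs : Set (Fin (m + 1) → F))}
        = {z : P₂ | z.submodule ≤ LinearMap.ker f} from by rw [hspan]]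
    by_cases hzk : z.submodule ≤ LinearMap.ker f
    · exact mem_mapSet hzk hzv
    · have hzu : z ≠ u := by
        rintro rfl
        rw [hu] at hzv
        cases hzv
      have hfz : f z.rep ≠ 0 := by
        intro h0
        apply hzk
        rw [Projectivization.submodule_eq, Submodule.span_singleton_le_iff_mem]
        exact LinearMap.mem_ker.mpr h0
      have hy0 : z.rep - f z.rep • u.rep ≠ 0 := by
        intro h0
        apply hzu
        have hzz : z.rep = f z.rep • u.rep := by
          rw [← sub_eq_zero]; exact h0
        have : Projectivization.mk F z.rep z.rep_nonzero
            = Projectivization.mk F u.rep u.rep_nonzero := by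
          rw [Projectivization.mk_eq_mk_iff']
          exact ⟨f z.rep, hzz.symm⟩
        rw [← z.mk_rep, ← u.mk_rep]
        exact this
      set y := z.rep - f z.rep • u.rep with hy
      have hyk : y ∈ LinearMap.ker f := by
        rw [LinearMap.mem_ker, hy, map_sub, map_smul, hfu, smul_eq_mul, mul_one, sub_self]
      set z' : P₂ := Projectivization.mk F y hy0 with hz'
      have hz'k : z'.submodule ≤ LinearMap.ker f := by
        rw [hz', Projectivization.submodule_mk, Submodule.span_singleton_le_iff_mem]
        exact hyk
      have huz' : u ≠ z' := by
        intro h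
        have h1 : u.submodule ≤ LinearMap.ker f := by rw [h]; exact hz'k
        have h2 : u.rep ∈ LinearMap.ker f := h1 (rep_mem_submodule u)
        rw [LinearMap.mem_ker, hfu] at h2
        exact one_ne_zero h2
      have hzline : z ∈ projLineThrough u z' := by
        show z.submodule ≤ _
        rw [Projectivization.submodule_eq, Submodule.span_singleton_le_iff_mem]
        have hzz : z.rep = f z.rep • u.rep + y := by rw [hy]; abel
        rw [hzz]
        exact Submodule.add_mem_sup
          (Submodule.smul_mem _ _ (rep_mem_submodule u))
          (by rw [hz', Projectivization.submodule_mk]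
              exact Submodule.mem_span_singleton_self _)
      have hl := const_line hG (vert_mem (pLT_mem_projLines huz'))
        (mem_vert_prod mem_pLT_left) (mem_vert_prod mem_pLT_right)
        (fun h => huz' (congrArg Prod.snd h).symm) hu
      have hmem : ξ ∈ ptImg χ (A, z') := by
        rw [← hl]
        exact mem_mapSet (mem_vert_prod hzline) hzv
      exact mem_mapSet hz'k hmem
  have hle : spanOf (mapSet χ (({A} : Set P₁) ×ˢ (univ : Set P₂)))
      ≤ Submodule.span K (ts : Set W) := by
    rw [mapSet_vert]
    apply iSup₂_le
    intro ξ hξ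
    exact hts ξ (hincl ξ hξ)
  have hrank := Submodule.rank_mono hle
  rw [hII] at hrank
  have h2 : Module.rank K ↥(Submodule.span K (ts : Set W)) ≤ (ts.card : Cardinal) := by
    have h1 := rank_span_le (R := K) (ts : Set W)
    have h2 : (Cardinal.mk ↑(ts : Set W)) = (ts.card : Cardinal) := by
      simp
    rwa [h2] at h1
  have h3 : ((m : Cardinal) + 1) ≤ (m : Cardinal) := by
    refine (hrank.trans h2).trans ?_
    have : ts.card ≤ m := htscard.trans hcard
    exact_mod_cast this
  have h4 : (m + 1 : ℕ) ≤ m := by exact_mod_cast h3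
  omega

end CondIIFinal

end SegreAux

namespace SegreAux

open Segre Projectivization

section Scenario

variable {F : Type*} [Field F] {n m : ℕ}
variable {K W : Type*} [Field K] [AddCommGroup W] [Module K W]

local notation "P₁" => Projectivization F (Fin (n + 1) → F)
local notation "P₂" => Projectivization F (Fin (m + 1) → F)
local notation "TT" => Projectivization K W

theorem scenario {ψa ψb : P₁ × P₂ → Option TT} (hGa : Good ψa) (hGb : Good ψb)
    {ℓ₂ : Set P₂} (hℓ₂ : ℓ₂ ∈ projLines F (Fin (m + 1) → F))
    {A : P₁}
    (hτ : ∀ Z : P₂, ψa (A, Z) = ψb (A, Z))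
    (hAex : ∀ Z : P₂, ψb (A, Z) ≠ none)
    (hcolim : ∀ X : P₁, mapSet ψa (({X} : Set P₁) ×ˢ ℓ₂) = mapSet ψb (({X} : Set P₁) ×ˢ ℓ₂))
    {X : P₁} (hXA : X ≠ A)
    {Y₁ : P₂} (hY₁ : Y₁ ∈ ℓ₂) {c : TT}
    (hna : ψa (X, Y₁) = none) (hsb : ψb (X, Y₁) = some c) : False := by
  have hAexa : ∀ Z : P₂, ψa (A, Z) ≠ none := fun Z => by rw [hτ Z]; exact hAex Z
  have hAX : A ≠ X := Ne.symm hXA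
  have hlstar : projLineThrough A X ∈ projLines F (Fin (n + 1) → F) := pLT_mem_projLines hAX
  -- Step 1: ψa is constantly c on the column of X, away from Y₁
  have hcM : c ∈ mapSet ψa (({X} : Set P₁) ×ˢ ℓ₂) := by
    rw [hcolim X]; exact mem_mapSet (mem_vert_prod hY₁) hsb
  have hψaX : ∀ Z ∈ ℓ₂, Z ≠ Y₁ → ψa (X, Z) = some c := by
    intro Z hZ hne
    have h1 := const_line hGa (vert_mem hℓ₂) (mem_vert_prod hY₁) (mem_vert_prod hZ)
      (fun h => hne (congrArg Prod.snd h)) hna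
    rw [← mem_ptImg_iff, ← h1]
    exact hcM
  -- Step 2: ψb has an exceptional point (X, Y₂) on the column of X with Y₂ ≠ Y₁,
  -- and is constantly c away from it.
  obtain ⟨Z0, hZ0ℓ, hZ0ne⟩ := exists_ne_mem_line hℓ₂ Y₁
  have hMa : mapSet ψa (({X} : Set P₁) ×ˢ ℓ₂) = {c} := by
    rw [const_line hGa (vert_mem hℓ₂) (mem_vert_prod hY₁) (mem_vert_prod hZ0ℓ)
      (fun h => hZ0ne (congrArg Prod.snd h)) hna, ptImg_some (hψaX Z0 hZ0ℓ hZ0ne)]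
  have hexb : ∃ Y₂ ∈ ℓ₂, ψb (X, Y₂) = none := by
    by_contra hno
    push_neg at hno
    obtain ⟨ξ, hξ⟩ := Option.ne_none_iff_exists'.mp (hno Z0 hZ0ℓ)
    have hξc : ξ = c := by
      have h2 : ξ ∈ mapSet ψb (({X} : Set P₁) ×ˢ ℓ₂) := mem_mapSet (mem_vert_prod hZ0ℓ) hξ
      rw [← hcolim X, hMa] at h2
      exact mem_singleton_iff.mp h2
    subst hξc
    obtain ⟨r, hr, hrn⟩ := hGb.g2 _ (vert_mem hℓ₂) (X, Y₁) (X, Z0)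
      (mem_vert_prod hY₁) (mem_vert_prod hZ0ℓ)
      (fun h => hZ0ne (congrArg Prod.snd h).symm)
      (by rw [ptImg_some hsb, ptImg_some hξ])
    have hrr : ((X : P₁), r.2) = r := Prod.ext (mem_singleton_iff.mp hr.1).symm rfl
    apply hno r.2 hr.2
    rw [hrr]
    exact hrn
  obtain ⟨Y₂, hY₂ℓ, hbY₂⟩ := hexb
  have hY₂ne : Y₂ ≠ Y₁ := by
    rintro rfl; rw [hsb] at hbY₂; cases hbY₂
  have hψbX : ∀ Z ∈ ℓ₂, Z ≠ Y₂ → ψb (X, Z) = some c := by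
    intro Z hZ hne
    have h1 := const_line hGb (vert_mem hℓ₂) (mem_vert_prod hY₂ℓ) (mem_vert_prod hZ)
      (fun h => hne (congrArg Prod.snd h)) hbY₂
    rw [← mem_ptImg_iff, ← h1]
    exact mem_mapSet (mem_vert_prod hY₁) hsb
  -- Step 3/4: the shared column over A has no exceptional points, hence is injective
  obtain ⟨u, hu⟩ := Option.ne_none_iff_exists'.mp (hAex Y₁)
  obtain ⟨v, hv⟩ := Option.ne_none_iff_exists'.mp (hAex Y₂)
  have hτinj : ∀ Z ∈ ℓ₂, ∀ Z' ∈ ℓ₂, Z ≠ Z' → ψb (A, Z) ≠ ψb (A, Z') := by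
    intro Z hZ Z' hZ' hne heq
    obtain ⟨r, hr, hrn⟩ := hGb.g2 _ (vert_mem hℓ₂) (A, Z) (A, Z')
      (mem_vert_prod hZ) (mem_vert_prod hZ') (fun h => hne (congrArg Prod.snd h))
      (by simp only [ptImg, heq])
    have hrr : ((A : P₁), r.2) = r := Prod.ext (mem_singleton_iff.mp hr.1).symm rfl
    apply hAex r.2
    rw [hrr]
    exact hrn
  have huv : u ≠ v := by
    rintro rfl
    exact hτinj Y₁ hY₁ Y₂ hY₂ℓ (Ne.symm hY₂ne) (by rw [hu, hv])
  -- Step 6: row constants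
  have hψaR : ∀ R ∈ projLineThrough A X, R ≠ X → ψa (R, Y₁) = some u := by
    intro R hR hRX
    have hau : ψa (A, Y₁) = some u := by rw [hτ]; exact hu
    by_cases hRA : R = A
    · rw [hRA]; exact hau
    · exact const_line_val hGa (horiz_mem hlstar Y₁)
        (mem_horiz_prod mem_pLT_right) (mem_horiz_prod mem_pLT_left) (mem_horiz_prod hR)
        (fun h => hAX (congrArg Prod.fst h)) (fun h => hRX (congrArg Prod.fst h)) hna hau
  have hψbR : ∀ R ∈ projLineThrough A X, R ≠ X → ψb (R, Y₂) = some v := by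
    intro R hR hRX
    by_cases hRA : R = A
    · rw [hRA]; exact hv
    · exact const_line_val hGb (horiz_mem hlstar Y₂)
        (mem_horiz_prod mem_pLT_right) (mem_horiz_prod mem_pLT_left) (mem_horiz_prod hR)
        (fun h => hAX (congrArg Prod.fst h)) (fun h => hRX (congrArg Prod.fst h)) hbY₂ hv
  -- Step 7: no exceptional points on middle columns
  have hnoexc : ∀ R ∈ projLineThrough A X, R ≠ A → R ≠ X →
      ∀ Z ∈ ℓ₂, ψa (R, Z) ≠ none ∧ ψb (R, Z) ≠ none := by
    intro R hR hRA hRX Z hZ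
    have huM : u ∈ mapSet ψa (({R} : Set P₁) ×ˢ ℓ₂) :=
      mem_mapSet (mem_vert_prod hY₁) (hψaR R hR hRX)
    have hvM : v ∈ mapSet ψb (({R} : Set P₁) ×ˢ ℓ₂) :=
      mem_mapSet (mem_vert_prod hY₂ℓ) (hψbR R hR hRX)
    obtain ⟨Z', hZ'ℓ, hZ'ne⟩ := exists_ne_mem_line hℓ₂ Z
    constructor
    · intro hnone
      have h1 := const_line hGa (vert_mem hℓ₂) (mem_vert_prod hZ) (mem_vert_prod hZ'ℓ)
        (fun h => hZ'ne (congrArg Prod.snd h)) hnone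
      have hu' : u ∈ ptImg ψa (R, Z') := by rw [← h1]; exact huM
      have hv' : v ∈ ptImg ψa (R, Z') := by rw [← h1, hcolim R]; exact hvM
      exact huv (ptImg_unique hu' hv')
    · intro hnone
      have h1 := const_line hGb (vert_mem hℓ₂) (mem_vert_prod hZ) (mem_vert_prod hZ'ℓ)
        (fun h => hZ'ne (congrArg Prod.snd h)) hnone
      have hu' : u ∈ ptImg ψb (R, Z') := by rw [← h1, ← hcolim R]; exact huM
      have hv' : v ∈ ptImg ψb (R, Z') := by rw [← h1]; exact hvM
      exact huv (ptImg_unique hu' hv')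
  -- exceptional-point eliminators on rows
  have hbexc : ∀ Z ∈ ℓ₂, Z ≠ Y₂ → ∀ r : P₁ × P₂,
      r ∈ projLineThrough A X ×ˢ ({Z} : Set P₂) → ψb r = none → False := by
    intro Z hZ hZY₂ r hr hrn
    have hrr : (r.1, Z) = r := Prod.ext rfl (mem_singleton_iff.mp hr.2).symm
    rw [← hrr] at hrn
    by_cases hrX : r.1 = X
    · rw [hrX, hψbX Z hZ hZY₂] at hrn; cases hrn
    · by_cases hrA : r.1 = A
      · rw [hrA] at hrn; exact hAex Z hrn
      · exact (hnoexc r.1 hr.1 hrA hrX Z hZ).2 hrn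
  have haexc : ∀ Z ∈ ℓ₂, Z ≠ Y₁ → ∀ r : P₁ × P₂,
      r ∈ projLineThrough A X ×ˢ ({Z} : Set P₂) → ψa r = none → False := by
    intro Z hZ hZY₁ r hr hrn
    have hrr : (r.1, Z) = r := Prod.ext rfl (mem_singleton_iff.mp hr.2).symm
    rw [← hrr] at hrn
    by_cases hrX : r.1 = X
    · rw [hrX, hψaX Z hZ hZY₁] at hrn; cases hrn
    · by_cases hrA : r.1 = A
      · rw [hrA] at hrn; exact hAexa Z hrn
      · exact (hnoexc r.1 hr.1 hrA hrX Z hZ).1 hrn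
  -- Step 8: the image of the column over A is the full line through u and v
  have hMA : mapSet ψb (({A} : Set P₁) ×ˢ ℓ₂) = projLineThrough u v := by
    rw [hGb.g1 _ (vert_mem hℓ₂) (A, Y₁) (A, Y₂) (mem_vert_prod hY₁) (mem_vert_prod hY₂ℓ)
      (fun h => hY₂ne (congrArg Prod.snd h).symm), ptImg_some hu, ptImg_some hv,
      sJoin_singletons huv]
  -- Step 9: middle columns have the same image line
  have hMR : ∀ R ∈ projLineThrough A X, R ≠ A → R ≠ X →
      mapSet ψb (({R} : Set P₁) ×ˢ ℓ₂) = projLineThrough u v := by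
    intro R hR hRA hRX
    obtain ⟨a2, ha2⟩ := Option.ne_none_iff_exists'.mp ((hnoexc R hR hRA hRX Y₂ hY₂ℓ).1)
    have h1 : mapSet ψa (({R} : Set P₁) ×ˢ ℓ₂)
        = sJoin (projLines K W) {u} (ptImg ψa (R, Y₂)) := by
      rw [hGa.g1 _ (vert_mem hℓ₂) (R, Y₁) (R, Y₂) (mem_vert_prod hY₁) (mem_vert_prod hY₂ℓ)
        (fun h => hY₂ne (congrArg Prod.snd h).symm), ptImg_some (hψaR R hR hRX)]
    rw [ptImg_some ha2] at h1
    have hvM : v ∈ mapSet ψa (({R} : Set P₁) ×ˢ ℓ₂) := by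
      rw [hcolim R]; exact mem_mapSet (mem_vert_prod hY₂ℓ) (hψbR R hR hRX)
    by_cases hua : u = a2
    · rw [← hua, sJoin_singleton_same] at h1
      rw [h1] at hvM
      exact absurd (mem_singleton_iff.mp hvM).symm huv
    · rw [sJoin_singletons hua] at h1
      rw [h1] at hvM
      rw [← hcolim R, h1]
      exact (pLT_eq_of_mem hua huv mem_pLT_left hvM).symm
  -- Step 10: τ never takes the value c away from Y₁, Y₂
  have hτnec : ∀ Z ∈ ℓ₂, Z ≠ Y₁ → Z ≠ Y₂ → ψb (A, Z) ≠ some c := by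
    intro Z hZ h1 h2 heq
    obtain ⟨r, hr, hrn⟩ := hGb.g2 _ (horiz_mem hlstar Z) (X, Z) (A, Z)
      (mem_horiz_prod mem_pLT_right) (mem_horiz_prod mem_pLT_left)
      (fun h => hXA (congrArg Prod.fst h))
      (by rw [ptImg_some (hψbX Z hZ h2), ptImg_some heq])
    exact hbexc Z hZ h2 r hr hrn
  -- Step 11/12: a third point Z₃ of ℓ₂ and c ∈ projLineThrough u v
  have hY₁Y₂ : Y₁ ≠ Y₂ := Ne.symm hY₂ne
  have hℓeq : ℓ₂ = projLineThrough Y₁ Y₂ := line_eq hℓ₂ hY₁Y₂ hY₁ hY₂ℓ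
  obtain ⟨Z₃, hZ₃mem, hZ₃1, hZ₃2⟩ := exists_third hY₁Y₂
  have hZ₃ℓ : Z₃ ∈ ℓ₂ := by rw [hℓeq]; exact hZ₃mem
  obtain ⟨t₃, ht₃⟩ := Option.ne_none_iff_exists'.mp (hAex Z₃)
  have ht₃L : t₃ ∈ projLineThrough u v := by
    rw [← hMA]
    exact mem_mapSet (mem_vert_prod hZ₃ℓ) ht₃
  obtain ⟨Q, hQmem, hQA, hQX⟩ := exists_third hAX
  obtain ⟨β, hβ⟩ := Option.ne_none_iff_exists'.mp ((hnoexc Q hQmem hQA hQX Z₃ hZ₃ℓ).2)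
  have hβL : β ∈ projLineThrough u v := by
    rw [← hMR Q hQmem hQA hQX]
    exact mem_mapSet (mem_vert_prod hZ₃ℓ) hβ
  have ht₃β : t₃ ≠ β := by
    intro heq
    obtain ⟨r, hr, hrn⟩ := hGb.g2 _ (horiz_mem hlstar Z₃) (A, Z₃) (Q, Z₃)
      (mem_horiz_prod mem_pLT_left) (mem_horiz_prod hQmem)
      (fun h => hQA (congrArg Prod.fst h).symm)
      (by rw [ptImg_some ht₃, ptImg_some hβ, heq])
    exact hbexc Z₃ hZ₃ℓ hZ₃2 r hr hrn
  have hcL : c ∈ projLineThrough u v := by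
    have hrow : mapSet ψb (projLineThrough A X ×ˢ ({Z₃} : Set P₂))
        = projLineThrough t₃ β := by
      rw [hGb.g1 _ (horiz_mem hlstar Z₃) (A, Z₃) (Q, Z₃) (mem_horiz_prod mem_pLT_left)
        (mem_horiz_prod hQmem) (fun h => hQA (congrArg Prod.fst h).symm),
        ptImg_some ht₃, ptImg_some hβ, sJoin_singletons ht₃β]
    have hcmem : c ∈ mapSet ψb (projLineThrough A X ×ˢ ({Z₃} : Set P₂)) :=
      mem_mapSet (mem_horiz_prod mem_pLT_right) (hψbX Z₃ hZ₃ℓ hZ₃2)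
    rw [hrow] at hcmem
    rwa [pLT_eq_of_mem huv ht₃β ht₃L hβL] at hcmem
  -- Step 13/14: the value c is taken on the column over A, final contradiction
  have hcMA : c ∈ mapSet ψb (({A} : Set P₁) ×ˢ ℓ₂) := by rw [hMA]; exact hcL
  obtain ⟨r, hr, hrc⟩ := exists_of_mem_mapSet hcMA
  have hrr : ((A : P₁), r.2) = r := Prod.ext (mem_singleton_iff.mp hr.1).symm rfl
  have hτc : ψb (A, r.2) = some c := by rw [hrr]; exact hrc
  by_cases hc1 : r.2 = Y₁
  · have huc : u = c := by
      rw [hc1, hu] at hτc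
      exact Option.some_inj.mp hτc
    obtain ⟨r', hr', hrn'⟩ := hGb.g2 _ (horiz_mem hlstar Y₁) (X, Y₁) (A, Y₁)
      (mem_horiz_prod mem_pLT_right) (mem_horiz_prod mem_pLT_left)
      (fun h => hXA (congrArg Prod.fst h))
      (by rw [ptImg_some hsb, ptImg_some hu, huc])
    exact hbexc Y₁ hY₁ hY₁Y₂ r' hr' hrn'
  · by_cases hc2 : r.2 = Y₂
    · have hvc : v = c := by
        rw [hc2, hv] at hτc
        exact Option.some_inj.mp hτc
      have hav : ψa (A, Y₂) = some c := by rw [hτ, hv, hvc]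
      obtain ⟨r', hr', hrn'⟩ := hGa.g2 _ (horiz_mem hlstar Y₂) (X, Y₂) (A, Y₂)
        (mem_horiz_prod mem_pLT_right) (mem_horiz_prod mem_pLT_left)
        (fun h => hXA (congrArg Prod.fst h))
        (by rw [ptImg_some (hψaX Y₂ hY₂ℓ hY₂ne), ptImg_some hav])
      exact haexc Y₂ hY₂ℓ hY₂ne r' hr' hrn'
    · exact hτnec r.2 hr.2 hc1 hc2 hτc

end Scenario

end SegreAux


open Segre Set in
/-- Proposition `eccezionali`: for a special line `ℓ₂` and
`X₁ ∈ 𝒫₁ ∖ {A}`, the exceptional sets of `γφ` and of `αχ` on `AX₁ × ℓ₂` coincide. -/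
theorem statement_11 (F : Type*) [Field F] (n m : ℕ) (hn : 2 ≤ n) (hm : 1 ≤ m)
    (K W : Type*) [Field K] [AddCommGroup W] [Module K W]
    (χ : PGPt F n × PGPt F m → Option (Projectivization K W))
    (hχ : IsLinMap (prodLines (PGLines F n) (PGLines F m)) (projLines K W) χ)
    (B : Fin (m + 1) → PGPt F m) (E : Set (PGPt F n)) (hI : CondI F n m χ B E)
    (A : PGPt F n) (hII : CondII F n m χ A)
    (γ : PGPt F n × PGPt F m → PGPt F (n * m + n + m))
    (hγ : IsRegularEmbedding F n m γ)
    (φ : PGPt F (n * m + n + m) → Option (Projectivization K W))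
    (hφ : IsLinMap (PGLines F (n * m + n + m)) (projLines K W) φ)
    (hext : ∀ (X : PGPt F n) (i : Fin (m + 1)), φ (γ (X, B i)) = χ (X, B i))
    (α' : PGPt F m → PGPt F m) (hα' : IsCollineation (PGLines F m) α')
    (hdef : ∀ X : PGPt F m, χ (A, α' X) = φ (γ (A, X)))
    (ℓ₂ : Set (PGPt F m)) (hsp : SpecialLine F n m χ γ φ α' ℓ₂)
    (X₁ : PGPt F n) (hX₁ : X₁ ≠ A) :
    {q ∈ projLineThrough A X₁ ×ˢ ℓ₂ | φ (γ q) = none} =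
      {q ∈ projLineThrough A X₁ ×ˢ ℓ₂ | χ (q.1, α' q.2) = none} := by
  classical
  have hGa : SegreAux.Good (fun p : PGPt F n × PGPt F m => φ (γ p)) :=
    SegreAux.good_a hγ.1 hγ.2.1 hφ
  have hGb : SegreAux.Good (fun p : PGPt F n × PGPt F m => χ (p.1, α' p.2)) :=
    SegreAux.good_b hχ hα'.1.1 (fun g hg => (hα'.2 g).mp hg)
  have hAex : ∀ Z : PGPt F m, χ (A, α' Z) ≠ none := fun Z =>
    SegreAux.colA_not_none (SegreAux.good_of_isLinMap hχ) hII (α' Z)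
  have hτ : ∀ Z : PGPt F m, φ (γ (A, Z)) = χ (A, α' Z) := fun Z => (hdef Z).symm
  have hcolim := hsp.2.1
  ext q
  simp only [mem_setOf_eq]
  constructor
  · rintro ⟨hmem, hnone⟩
    refine ⟨hmem, ?_⟩
    by_cases hPA : q.1 = A
    · have hq : ((A : PGPt F n), q.2) = q := Prod.ext hPA.symm rfl
      rw [hPA, hdef q.2, hq]
      exact hnone
    · by_contra hne
      obtain ⟨c, hc⟩ := Option.ne_none_iff_exists'.mp hne
      exact SegreAux.scenario hGa hGb hsp.1 (fun Z => hτ Z) hAex hcolim hPA hmem.2 hnone hc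
  · rintro ⟨hmem, hnone⟩
    refine ⟨hmem, ?_⟩
    by_cases hPA : q.1 = A
    · have hq : ((A : PGPt F n), q.2) = q := Prod.ext hPA.symm rfl
      rw [← hq, ← hdef q.2]
      rwa [hPA] at hnone
    · by_contra hne
      obtain ⟨c, hc⟩ := Option.ne_none_iff_exists'.mp hne
      exact SegreAux.scenario hGb hGa hsp.1 (fun Z => hdef Z) 
        (fun Z => by rw [← hdef Z]; exact hAex Z)
        (fun X => (hcolim X).symm) hPA hmem.2 hnone hc
end

section
/- Let ℓ₁ and ℓ₂ be lines of projective spaces over a commutative field F and let μ: ℓ₁ × ℓ₂ → ℙ' be a global linear map of their product into a projective space ℙ'. Assume A and X₁ are distinct points of ℓ₁ such that r := ({A} × ℓ₂)μ and s := ({X₁} × ℓ₂)μ are distinct lines of ℙ' whose intersection is a single point Z. Then: for every X ∈ ℓ₁ the set g_X := ({X} × ℓ₂)μ is a line of ℙ' contained in the plane r ∨ s; the family {g_X : X ∈ ℓ₁} is injective, i.e., X ≠ X' implies g_X ≠ g_{X'}; and for every T ∈ ℓ₂ there exists C ∈ ℓ₁ with (ℓ₁ × {T})μ = g_C. -/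
open Set

section Aux

open Segre Set

variable {K W : Type*} [Field K] [AddCommGroup W] [Module K W]

lemma Aux.mem_plt_left (p q : Projectivization K W) : p ∈ projLineThrough p q :=
  (le_sup_left : p.submodule ≤ _)

lemma Aux.mem_plt_right (p q : Projectivization K W) : q ∈ projLineThrough p q :=
  (le_sup_right : q.submodule ≤ _)

lemma Aux.plt_mem {p q : Projectivization K W} (h : p ≠ q) :
    projLineThrough p q ∈ projLines K W := ⟨p, q, h, rfl⟩

lemma Aux.finrank_sup {p q : Projectivization K W} (h : p ≠ q) :
    Module.finrank K ↥(p.submodule ⊔ q.submodule) = 2 := by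
  haveI : FiniteDimensional K p.submodule :=
    FiniteDimensional.of_finrank_eq_succ p.finrank_submodule
  haveI : FiniteDimensional K q.submodule :=
    FiniteDimensional.of_finrank_eq_succ q.finrank_submodule
  have hne : p.submodule ≠ q.submodule := fun hh => h (Projectivization.submodule_injective hh)
  have hlt : p.submodule ⊓ q.submodule < p.submodule := by
    rcases lt_or_eq_of_le (inf_le_left : p.submodule ⊓ q.submodule ≤ p.submodule) with h1 | h1
    · exact h1
    · exfalso
      have hle : p.submodule ≤ q.submodule := h1 ▸ inf_le_right
      exact hne (Submodule.eq_of_le_of_finrank_eq hle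
        (by rw [p.finrank_submodule, q.finrank_submodule]))
  have h0 : Module.finrank K ↥(p.submodule ⊓ q.submodule) = 0 := by
    have := Submodule.finrank_lt_finrank_of_lt hlt
    rw [p.finrank_submodule] at this
    omega
  have := Submodule.finrank_sup_add_finrank_inf_eq p.submodule q.submodule
  rw [h0, p.finrank_submodule, q.finrank_submodule] at this
  omega

/-- Uniqueness: a projective line through two distinct points is the line they span. -/
lemma Aux.line_unique {p q : Projectivization K W} (hpq : p ≠ q) {g : Set (Projectivization K W)}
    (hg : g ∈ projLines K W) (hp : p ∈ g) (hq : q ∈ g) : g = projLineThrough p q := by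
  obtain ⟨x, y, hxy, rfl⟩ := hg
  have hple : p.submodule ≤ x.submodule ⊔ y.submodule := hp
  have hqle : q.submodule ≤ x.submodule ⊔ y.submodule := hq
  haveI : FiniteDimensional K x.submodule :=
    FiniteDimensional.of_finrank_eq_succ x.finrank_submodule
  haveI : FiniteDimensional K y.submodule :=
    FiniteDimensional.of_finrank_eq_succ y.finrank_submodule
  have hkey : p.submodule ⊔ q.submodule = x.submodule ⊔ y.submodule :=
    Submodule.eq_of_le_of_finrank_eq (sup_le hple hqle)
      (by rw [Aux.finrank_sup hpq, Aux.finrank_sup hxy])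
  unfold projLineThrough
  rw [hkey]

lemma Aux.line_eq_line {p q : Projectivization K W} (hpq : p ≠ q)
    {g g' : Set (Projectivization K W)} (hg : g ∈ projLines K W) (hg' : g' ∈ projLines K W)
    (hp : p ∈ g) (hq : q ∈ g) (hp' : p ∈ g') (hq' : q ∈ g') : g = g' := by
  rw [Aux.line_unique hpq hg hp hq, Aux.line_unique hpq hg' hp' hq']

lemma Aux.lineThru_proj {p q : Projectivization K W} (h : p ≠ q) :
    lineThru (projLines K W) p q = projLineThrough p q := by
  apply subset_antisymm
  · intro z hz
    simp only [lineThru, mem_iUnion, mem_setOf_eq] at hz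
    obtain ⟨g, ⟨hg, hp, hq⟩, hzg⟩ := hz
    rwa [Aux.line_unique h hg hp hq] at hzg
  · intro z hz
    simp only [lineThru, mem_iUnion, mem_setOf_eq]
    exact ⟨projLineThrough p q, ⟨Aux.plt_mem h, Aux.mem_plt_left p q, Aux.mem_plt_right p q⟩, hz⟩

lemma Aux.collin_proj {p q : Projectivization K W} (h : p ≠ q) :
    Collin (projLines K W) p q :=
  ⟨projLineThrough p q, Aux.plt_mem h, Aux.mem_plt_left p q, Aux.mem_plt_right p q⟩

lemma Aux.sJoin_singleton_proj {p q : Projectivization K W} (h : p ≠ q) :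
    sJoin (projLines K W) {p} {q} = projLineThrough p q := by
  unfold sJoin
  have h1 : (⋃ x ∈ ({p} : Set (Projectivization K W)),
      ⋃ y ∈ ({q} : Set (Projectivization K W)),
      ⋃ _ : x ≠ y ∧ Collin (projLines K W) x y, lineThru (projLines K W) x y)
      = projLineThrough p q := by
    simp only [mem_singleton_iff, iUnion_iUnion_eq_left]
    classical
    rw [Set.iUnion_eq_if, if_pos ⟨h, Aux.collin_proj h⟩, Aux.lineThru_proj h]
  rw [h1]
  apply union_eq_self_of_subset_left
  intro z hz
  rcases hz with hz | hz
  · rw [mem_singleton_iff.mp hz]; exact Aux.mem_plt_left p q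
  · rw [mem_singleton_iff.mp hz]; exact Aux.mem_plt_right p q

lemma Aux.exists_two_points {g : Set (Projectivization K W)} (hg : g ∈ projLines K W) :
    ∃ x ∈ g, ∃ y ∈ g, x ≠ y := by
  obtain ⟨x, y, hxy, rfl⟩ := hg
  exact ⟨x, Aux.mem_plt_left x y, y, Aux.mem_plt_right x y, hxy⟩

-- Product semilinear space lemmas

variable {P Q : Type*} {ℓ₁ : Set P} {ℓ₂ : Set Q}

lemma Aux.column_mem {X : P} (hX : X ∈ ℓ₁) :
    ({X} : Set P) ×ˢ ℓ₂ ∈ lineProdLines ℓ₁ ℓ₂ := Or.inl ⟨X, hX, rfl⟩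

lemma Aux.row_mem {Y : Q} (hY : Y ∈ ℓ₂) :
    ℓ₁ ×ˢ ({Y} : Set Q) ∈ lineProdLines ℓ₁ ℓ₂ := Or.inr ⟨Y, hY, rfl⟩

lemma Aux.column_unique {X : P} {Y Y' : Q} (h : Y ≠ Y') {g : Set (P × Q)}
    (hg : g ∈ lineProdLines ℓ₁ ℓ₂) (h1 : (X, Y) ∈ g) (h2 : (X, Y') ∈ g) :
    g = ({X} : Set P) ×ˢ ℓ₂ := by
  rcases hg with ⟨X', _, rfl⟩ | ⟨Y'', _, rfl⟩
  · have : X' = X := (mem_singleton_iff.mp h1.1).symm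
    rw [this]
  · exact absurd ((mem_singleton_iff.mp h1.2).trans (mem_singleton_iff.mp h2.2).symm) h

lemma Aux.row_unique {X X' : P} {Y : Q} (h : X ≠ X') {g : Set (P × Q)}
    (hg : g ∈ lineProdLines ℓ₁ ℓ₂) (h1 : (X, Y) ∈ g) (h2 : (X', Y) ∈ g) :
    g = ℓ₁ ×ˢ ({Y} : Set Q) := by
  rcases hg with ⟨X'', _, rfl⟩ | ⟨Y'', _, rfl⟩
  · exact absurd ((mem_singleton_iff.mp h1.1).trans (mem_singleton_iff.mp h2.1).symm) h
  · have : Y'' = Y := (mem_singleton_iff.mp h1.2).symm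
    rw [this]

lemma Aux.lineThru_column {X : P} {Y Y' : Q} (hX : X ∈ ℓ₁) (hY : Y ∈ ℓ₂) (hY' : Y' ∈ ℓ₂)
    (h : Y ≠ Y') :
    lineThru (lineProdLines ℓ₁ ℓ₂) (X, Y) (X, Y') = ({X} : Set P) ×ˢ ℓ₂ := by
  apply subset_antisymm
  · intro z hz
    simp only [lineThru, mem_iUnion, mem_setOf_eq] at hz
    obtain ⟨g, ⟨hg, h1, h2⟩, hzg⟩ := hz
    rwa [Aux.column_unique h hg h1 h2] at hzg
  · intro z hz
    simp only [lineThru, mem_iUnion, mem_setOf_eq]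
    exact ⟨_, ⟨Aux.column_mem hX, ⟨rfl, hY⟩, ⟨rfl, hY'⟩⟩, hz⟩

lemma Aux.lineThru_row {X X' : P} {Y : Q} (hX : X ∈ ℓ₁) (hX' : X' ∈ ℓ₁) (hY : Y ∈ ℓ₂)
    (h : X ≠ X') :
    lineThru (lineProdLines ℓ₁ ℓ₂) (X, Y) (X', Y) = ℓ₁ ×ˢ ({Y} : Set Q) := by
  apply subset_antisymm
  · intro z hz
    simp only [lineThru, mem_iUnion, mem_setOf_eq] at hz
    obtain ⟨g, ⟨hg, h1, h2⟩, hzg⟩ := hz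
    rwa [Aux.row_unique h hg h1 h2] at hzg
  · intro z hz
    simp only [lineThru, mem_iUnion, mem_setOf_eq]
    exact ⟨_, ⟨Aux.row_mem hY, ⟨hX, rfl⟩, ⟨hX', rfl⟩⟩, hz⟩

lemma Aux.collin_column {X : P} {Y Y' : Q} (hX : X ∈ ℓ₁) (hY : Y ∈ ℓ₂) (hY' : Y' ∈ ℓ₂) :
    Collin (lineProdLines ℓ₁ ℓ₂) (X, Y) (X, Y') :=
  ⟨_, Aux.column_mem hX, ⟨rfl, hY⟩, ⟨rfl, hY'⟩⟩

lemma Aux.collin_row {X X' : P} {Y : Q} (hX : X ∈ ℓ₁) (hX' : X' ∈ ℓ₁) (hY : Y ∈ ℓ₂) :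
    Collin (lineProdLines ℓ₁ ℓ₂) (X, Y) (X', Y) :=
  ⟨_, Aux.row_mem hY, ⟨hX, rfl⟩, ⟨hX', rfl⟩⟩

lemma Aux.sJoin_column {X : P} {Y Y' : Q} (hX : X ∈ ℓ₁) (hY : Y ∈ ℓ₂) (hY' : Y' ∈ ℓ₂)
    (h : Y ≠ Y') :
    sJoin (lineProdLines ℓ₁ ℓ₂) {(X, Y)} {(X, Y')} = ({X} : Set P) ×ˢ ℓ₂ := by
  unfold sJoin
  have hne : (X, Y) ≠ (X, Y') := fun hh => h (congrArg Prod.snd hh)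
  have h1 : (⋃ x ∈ ({(X, Y)} : Set (P × Q)), ⋃ y ∈ ({(X, Y')} : Set (P × Q)),
      ⋃ _ : x ≠ y ∧ Collin (lineProdLines ℓ₁ ℓ₂) x y, lineThru (lineProdLines ℓ₁ ℓ₂) x y)
      = ({X} : Set P) ×ˢ ℓ₂ := by
    simp only [mem_singleton_iff, iUnion_iUnion_eq_left]
    classical
    rw [Set.iUnion_eq_if, if_pos ⟨hne, Aux.collin_column hX hY hY'⟩,
      Aux.lineThru_column hX hY hY' h]
  rw [h1]
  apply union_eq_self_of_subset_left
  intro z hz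
  rcases hz with hz | hz
  · rw [mem_singleton_iff.mp hz]; exact ⟨rfl, hY⟩
  · rw [mem_singleton_iff.mp hz]; exact ⟨rfl, hY'⟩

lemma Aux.sJoin_row {X X' : P} {Y : Q} (hX : X ∈ ℓ₁) (hX' : X' ∈ ℓ₁) (hY : Y ∈ ℓ₂)
    (h : X ≠ X') :
    sJoin (lineProdLines ℓ₁ ℓ₂) {(X, Y)} {(X', Y)} = ℓ₁ ×ˢ ({Y} : Set Q) := by
  unfold sJoin
  have hne : (X, Y) ≠ (X', Y) := fun hh => h (congrArg Prod.fst hh)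
  have h1 : (⋃ x ∈ ({(X, Y)} : Set (P × Q)), ⋃ y ∈ ({(X', Y)} : Set (P × Q)),
      ⋃ _ : x ≠ y ∧ Collin (lineProdLines ℓ₁ ℓ₂) x y, lineThru (lineProdLines ℓ₁ ℓ₂) x y)
      = ℓ₁ ×ˢ ({Y} : Set Q) := by
    simp only [mem_singleton_iff, iUnion_iUnion_eq_left]
    classical
    rw [Set.iUnion_eq_if, if_pos ⟨hne, Aux.collin_row hX hX' hY⟩,
      Aux.lineThru_row hX hX' hY h]
  rw [h1]
  apply union_eq_self_of_subset_left
  intro z hz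
  rcases hz with hz | hz
  · rw [mem_singleton_iff.mp hz]; exact ⟨hX, rfl⟩
  · rw [mem_singleton_iff.mp hz]; exact ⟨hX', rfl⟩

lemma Aux.ptImg_eq {χ : P → Option Q} {p : P} {u : Q} (h : χ p = some u) :
    ptImg χ p = {u} := by
  ext v
  simp only [ptImg, mem_setOf_eq, h, Option.some_inj, mem_singleton_iff, eq_comm]

lemma Aux.mem_mapSet {χ : P → Option Q} {M : Set P} {p : P} {u : Q}
    (hp : p ∈ M) (h : χ p = some u) : u ∈ mapSet χ M :=
  Set.mem_biUnion hp h

end Aux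

open Segre Set in
/-- Proposition `tesirido`, case 4.2, first part: the family
`𝓕 = {g_X : X ∈ ℓ₁}` consists of lines of the plane `r ∨ s`, is injective, and contains
every line `(ℓ₁ × {T})μ`, `T ∈ ℓ₂`. -/
theorem statement_14 (F : Type*) [Field F]
    (V₁ V₂ : Type*) [AddCommGroup V₁] [Module F V₁] [AddCommGroup V₂] [Module F V₂]
    (K W : Type*) [Field K] [AddCommGroup W] [Module K W]
    (ℓ₁ : Set (Projectivization F V₁)) (hℓ₁ : ℓ₁ ∈ projLines F V₁)
    (ℓ₂ : Set (Projectivization F V₂)) (hℓ₂ : ℓ₂ ∈ projLines F V₂)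
    (μ : Projectivization F V₁ × Projectivization F V₂ → Option (Projectivization K W))
    (hμ : IsLinMap (lineProdLines ℓ₁ ℓ₂) (projLines K W) μ)
    (hglob : ∀ q ∈ ℓ₁ ×ˢ ℓ₂, μ q ≠ none)
    (A X₁ : Projectivization F V₁) (hA : A ∈ ℓ₁) (hX₁ : X₁ ∈ ℓ₁) (hAX : A ≠ X₁)
    -- the images of the rows of `A` and `X₁`
    (gl : Projectivization F V₁ → Set (Projectivization K W))
    (hgl : ∀ X : Projectivization F V₁,
      gl X = mapSet μ (({X} : Set (Projectivization F V₁)) ×ˢ ℓ₂))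
    (hr : gl A ∈ projLines K W) (hs : gl X₁ ∈ projLines K W) (hrs : gl A ≠ gl X₁)
    (Z : Projectivization K W) (hZ : gl A ∩ gl X₁ = {Z}) :
    (∀ X ∈ ℓ₁, gl X ∈ projLines K W ∧
      gl X ⊆ sJoin (projLines K W) (gl A) (gl X₁)) ∧
    (∀ X ∈ ℓ₁, ∀ X' ∈ ℓ₁, X ≠ X' → gl X ≠ gl X') ∧
    (∀ T ∈ ℓ₂, ∃ C ∈ ℓ₁,
      mapSet μ (ℓ₁ ×ˢ ({T} : Set (Projectivization F V₂))) = gl C) := by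
  classical
  have hval : ∀ X ∈ ℓ₁, ∀ Y ∈ ℓ₂, ∃ u, μ (X, Y) = some u := by
    intro X hX Y hY
    rcases h' : μ (X, Y) with _ | u
    · exact absurd h' (hglob (X, Y) ⟨hX, hY⟩)
    · exact ⟨u, rfl⟩
  obtain ⟨Y₀, hY₀, Y₁, hY₁, hY01⟩ := Aux.exists_two_points hℓ₂
  have col_inj : ∀ X ∈ ℓ₁, ∀ Y ∈ ℓ₂, ∀ Y' ∈ ℓ₂, Y ≠ Y' → μ (X, Y) ≠ μ (X, Y') := by
    intro X hX Y hY Y' hY' hYY' heq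
    have hne : (X, Y) ≠ (X, Y') := fun hh => hYY' (congrArg Prod.snd hh)
    have hpt : ptImg μ (X, Y) = ptImg μ (X, Y') := by
      unfold Segre.ptImg; rw [heq]
    obtain ⟨z, hz, hznone⟩ := hμ.2 _ _ (Aux.collin_column hX hY hY') hne hpt
    rw [Aux.lineThru_column hX hY hY' hYY'] at hz
    exact hglob z ⟨by rw [mem_singleton_iff.mp hz.1]; exact hX, hz.2⟩ hznone
  have row_inj : ∀ X ∈ ℓ₁, ∀ X' ∈ ℓ₁, X ≠ X' → ∀ Y ∈ ℓ₂, μ (X, Y) ≠ μ (X', Y) := by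
    intro X hX X' hX' hXX' Y hY heq
    have hne : (X, Y) ≠ (X', Y) := fun hh => hXX' (congrArg Prod.fst hh)
    have hpt : ptImg μ (X, Y) = ptImg μ (X', Y) := by
      unfold Segre.ptImg; rw [heq]
    obtain ⟨z, hz, hznone⟩ := hμ.2 _ _ (Aux.collin_row hX hX' hY) hne hpt
    rw [Aux.lineThru_row hX hX' hY hXX'] at hz
    exact hglob z ⟨hz.1, by rw [mem_singleton_iff.mp hz.2]; exact hY⟩ hznone
  have col_eq : ∀ X ∈ ℓ₁, ∀ Y ∈ ℓ₂, ∀ Y' ∈ ℓ₂, Y ≠ Y' → ∀ u u',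
      μ (X, Y) = some u → μ (X, Y') = some u' →
      u ≠ u' ∧ gl X = projLineThrough u u' := by
    intro X hX Y hY Y' hY' hYY' u u' hu hu'
    have huu' : u ≠ u' := by
      intro hh; exact col_inj X hX Y hY Y' hY' hYY' (by rw [hu, hu', hh])
    refine ⟨huu', ?_⟩
    have h1 := hμ.1 (X, Y) (X, Y') (Aux.collin_column hX hY hY')
    rw [Aux.sJoin_column hX hY hY' hYY', Aux.ptImg_eq hu, Aux.ptImg_eq hu',
      Aux.sJoin_singleton_proj huu'] at h1
    rw [hgl X]; exact h1
  have row_eq : ∀ X ∈ ℓ₁, ∀ X' ∈ ℓ₁, X ≠ X' → ∀ Y ∈ ℓ₂, ∀ u u',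
      μ (X, Y) = some u → μ (X', Y) = some u' →
      u ≠ u' ∧ mapSet μ (ℓ₁ ×ˢ ({Y} : Set (Projectivization F V₂))) = projLineThrough u u' := by
    intro X hX X' hX' hXX' Y hY u u' hu hu'
    have huu' : u ≠ u' := by
      intro hh; exact row_inj X hX X' hX' hXX' Y hY (by rw [hu, hu', hh])
    refine ⟨huu', ?_⟩
    have h1 := hμ.1 (X, Y) (X', Y) (Aux.collin_row hX hX' hY)
    rw [Aux.sJoin_row hX hX' hY hXX', Aux.ptImg_eq hu, Aux.ptImg_eq hu',
      Aux.sJoin_singleton_proj huu'] at h1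
    exact h1
  have mem_gl : ∀ X : Projectivization F V₁, ∀ Y ∈ ℓ₂, ∀ u, μ (X, Y) = some u → u ∈ gl X := by
    intro X Y hY u hu
    rw [hgl X]
    exact Aux.mem_mapSet (Set.mk_mem_prod (mem_singleton X) hY) hu
  have mem_row : ∀ X ∈ ℓ₁, ∀ Y : Projectivization F V₂, ∀ u, μ (X, Y) = some u →
      u ∈ mapSet μ (ℓ₁ ×ˢ ({Y} : Set (Projectivization F V₂))) :=
    fun X hX Y u hu => Aux.mem_mapSet (Set.mk_mem_prod hX (mem_singleton Y)) hu
  have gl_surj : ∀ X : Projectivization F V₁, ∀ w ∈ gl X, ∃ Y ∈ ℓ₂, μ (X, Y) = some w := by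
    intro X w hw
    rw [hgl X] at hw
    simp only [Segre.mapSet, Segre.ptImg, mem_iUnion, mem_setOf_eq] at hw
    obtain ⟨⟨x, y⟩, ⟨hx, hy⟩, hpw⟩ := hw
    obtain rfl : x = X := mem_singleton_iff.mp hx
    exact ⟨y, hy, hpw⟩
  have row_surj : ∀ Y : Projectivization F V₂,
      ∀ w ∈ mapSet μ (ℓ₁ ×ˢ ({Y} : Set (Projectivization F V₂))),
      ∃ X ∈ ℓ₁, μ (X, Y) = some w := by
    intro Y w hw
    simp only [Segre.mapSet, Segre.ptImg, mem_iUnion, mem_setOf_eq] at hw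
    obtain ⟨⟨x, y⟩, ⟨hx, hy⟩, hpw⟩ := hw
    obtain rfl : y = Y := mem_singleton_iff.mp hy
    exact ⟨x, hx, hpw⟩
  have gl_line : ∀ X ∈ ℓ₁, gl X ∈ projLines K W := by
    intro X hX
    obtain ⟨u, hu⟩ := hval X hX Y₀ hY₀
    obtain ⟨u', hu'⟩ := hval X hX Y₁ hY₁
    obtain ⟨hne, heq⟩ := col_eq X hX Y₀ hY₀ Y₁ hY₁ hY01 u u' hu hu'
    rw [heq]; exact Aux.plt_mem hne
  refine ⟨?_, ?_, ?_⟩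
  · intro X hX
    refine ⟨gl_line X hX, ?_⟩
    intro w hw
    obtain ⟨Y, hY, hw'⟩ := gl_surj X w hw
    obtain ⟨a, ha⟩ := hval A hA Y hY
    obtain ⟨b, hb⟩ := hval X₁ hX₁ Y hY
    obtain ⟨hab, hrow⟩ := row_eq A hA X₁ hX₁ hAX Y hY a b ha hb
    have hwrow : w ∈ projLineThrough a b := by
      rw [← hrow]; exact mem_row X hX Y w hw'
    unfold Segre.sJoin
    apply Set.mem_union_right
    simp only [mem_iUnion]
    exact ⟨a, mem_gl A Y hY a ha, b, mem_gl X₁ Y hY b hb, ⟨hab, Aux.collin_proj hab⟩,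
      by rwa [Aux.lineThru_proj hab]⟩
  · intro X hX X' hX' hXX' hglXX'
    obtain ⟨p, hp⟩ := hval X hX Y₀ hY₀
    obtain ⟨p', hp'⟩ := hval X' hX' Y₀ hY₀
    obtain ⟨q, hq⟩ := hval X hX Y₁ hY₁
    obtain ⟨q', hq'⟩ := hval X' hX' Y₁ hY₁
    obtain ⟨hpp', hrow0⟩ := row_eq X hX X' hX' hXX' Y₀ hY₀ p p' hp hp'
    obtain ⟨hqq', hrow1⟩ := row_eq X hX X' hX' hXX' Y₁ hY₁ q q' hq hq'
    have hglX := gl_line X hX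
    have h0 : gl X = mapSet μ (ℓ₁ ×ˢ ({Y₀} : Set (Projectivization F V₂))) := by
      rw [hrow0]
      exact Aux.line_unique hpp' hglX (mem_gl X Y₀ hY₀ p hp)
        (by rw [hglXX']; exact mem_gl X' Y₀ hY₀ p' hp')
    have h1 : gl X = mapSet μ (ℓ₁ ×ˢ ({Y₁} : Set (Projectivization F V₂))) := by
      rw [hrow1]
      exact Aux.line_unique hqq' hglX (mem_gl X Y₁ hY₁ q hq)
        (by rw [hglXX']; exact mem_gl X' Y₁ hY₁ q' hq')
    obtain ⟨a0, ha0⟩ := hval A hA Y₀ hY₀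
    obtain ⟨a1, ha1⟩ := hval A hA Y₁ hY₁
    have haa : a0 ≠ a1 := by
      intro hh; exact col_inj A hA Y₀ hY₀ Y₁ hY₁ hY01 (by rw [ha0, ha1, hh])
    have hgA : gl A = gl X :=
      Aux.line_eq_line haa (gl_line A hA) hglX
        (mem_gl A Y₀ hY₀ a0 ha0) (mem_gl A Y₁ hY₁ a1 ha1)
        (by rw [h0]; exact mem_row A hA Y₀ a0 ha0)
        (by rw [h1]; exact mem_row A hA Y₁ a1 ha1)
    obtain ⟨b0, hb0⟩ := hval X₁ hX₁ Y₀ hY₀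
    obtain ⟨b1, hb1⟩ := hval X₁ hX₁ Y₁ hY₁
    have hbb : b0 ≠ b1 := by
      intro hh; exact col_inj X₁ hX₁ Y₀ hY₀ Y₁ hY₁ hY01 (by rw [hb0, hb1, hh])
    have hgX₁ : gl X₁ = gl X :=
      Aux.line_eq_line hbb (gl_line X₁ hX₁) hglX
        (mem_gl X₁ Y₀ hY₀ b0 hb0) (mem_gl X₁ Y₁ hY₁ b1 hb1)
        (by rw [h0]; exact mem_row X₁ hX₁ Y₀ b0 hb0)
        (by rw [h1]; exact mem_row X₁ hX₁ Y₁ b1 hb1)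
    exact hrs (hgA.trans hgX₁.symm)
  · intro T hT
    have hZmem : Z ∈ gl A ∩ gl X₁ := by rw [hZ]; exact mem_singleton Z
    obtain ⟨Ya, hYa, hZa⟩ := gl_surj A Z hZmem.1
    obtain ⟨b, hb⟩ := hval X₁ hX₁ Ya hYa
    obtain ⟨hZb, hrowa⟩ := row_eq A hA X₁ hX₁ hAX Ya hYa Z b hZa hb
    have hs_row : mapSet μ (ℓ₁ ×ˢ ({Ya} : Set (Projectivization F V₂))) = gl X₁ := by
      rw [hrowa]
      exact (Aux.line_unique hZb hs hZmem.2 (mem_gl X₁ Ya hYa b hb)).symm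
    by_cases hTa : T = Ya
    · exact ⟨X₁, hX₁, by rw [hTa, hs_row]⟩
    · obtain ⟨c, hc⟩ := hval X₁ hX₁ T hT
      have hcs : c ∈ mapSet μ (ℓ₁ ×ˢ ({Ya} : Set (Projectivization F V₂))) := by
        rw [hs_row]; exact mem_gl X₁ T hT c hc
      obtain ⟨C, hC, hCc⟩ := row_surj Ya c hcs
      obtain ⟨d, hd⟩ := hval C hC T hT
      have hdc : d ≠ c := by
        intro hh
        exact col_inj C hC T hT Ya hYa hTa (by rw [hd, hCc, hh])
      refine ⟨C, hC, ?_⟩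
      obtain ⟨a, ha⟩ := hval A hA T hT
      obtain ⟨hac, hrowT⟩ := row_eq A hA X₁ hX₁ hAX T hT a c ha hc
      have hrowT_line : mapSet μ (ℓ₁ ×ˢ ({T} : Set (Projectivization F V₂))) ∈ projLines K W := by
        rw [hrowT]; exact Aux.plt_mem hac
      exact Aux.line_eq_line hdc hrowT_line (gl_line C hC)
        (mem_row C hC T d hd) (mem_row X₁ hX₁ T c hc)
        (mem_gl C T hT d hd) (mem_gl C Ya hYa c hCc)
end
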